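/- arXiv:1605.04851 — 2 statements merged into one kernel-verified Lean document; each statement's English description precedes it below -/
import Mathlib

section
/- For every γ ∈ (0, D*) and k ∈ ℤ⁺, every pair (E₁,E₂) ∈ ([0,E₁(γ)] × [0,E₂(γ)]) ∩ ((γ,γ) + k·R_FD) is achievable by the class of two-phase tests; that is, for every δ > 0 and all sufficiently large n there is a choice of parameters λ₁, λ₂, λ of the two-phase test such that P₁(A₂^τ) ≤ e^{−(E₁−δ)n} and P₂(A₁^τ) ≤ e^{−(E₂−δ)n}. -/
open Real Filter Finset MeasureTheory
open scoped Classical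

variable {𝒳 : Type*} [Fintype 𝒳] [DecidableEq 𝒳] [Nonempty 𝒳]

/-- Kullback–Leibler divergence `D(Q‖P)` between pmfs on a finite alphabet. -/
noncomputable def kl (Q P : 𝒳 → ℝ) : ℝ :=
  ∑ x, Q x * Real.log (Q x / P x)

/-- The `λ`-tilted distribution `P^(λ)` of `P₁` and `P₂`. -/
noncomputable def tilt (P₁ P₂ : 𝒳 → ℝ) (l : ℝ) : 𝒳 → ℝ :=
  fun x => P₁ x ^ (1 - l) * P₂ x ^ l / ∑ a, P₁ a ^ (1 - l) * P₂ a ^ l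

/-- Probability of a set of length-`N` sample paths under i.i.d. sampling from `P`. -/
noncomputable def prodProb (P : 𝒳 → ℝ) {N : ℕ} (S : Set (Fin N → 𝒳)) : ℝ :=
  ∑ ω : Fin N → 𝒳, S.indicator (fun ω' => ∏ i, P (ω' i)) ω

/-- The fixed-length error-exponent region `R_FD`. -/
def RFD (P₁ P₂ : 𝒳 → ℝ) : Set (ℝ × ℝ) :=
  {p | 0 ≤ p.1 ∧ 0 ≤ p.2 ∧
    ∃ l ∈ Set.Icc (0:ℝ) 1,
      p.1 ≤ kl (tilt P₁ P₂ l) P₁ ∧ p.2 ≤ kl (tilt P₁ P₂ l) P₂}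

/-- `E₁(γ) = max{D(P^(λ)‖P₁) : λ ∈ [0,1], D(P^(λ)‖P₂) ≥ γ}` (sup of the empty set is 0). -/
noncomputable def E1exp (P₁ P₂ : 𝒳 → ℝ) (γ : ℝ) : ℝ :=
  sSup {E | ∃ l ∈ Set.Icc (0:ℝ) 1, γ ≤ kl (tilt P₁ P₂ l) P₂ ∧ E = kl (tilt P₁ P₂ l) P₁}

/-- `E₂(γ) = max{D(P^(λ)‖P₂) : λ ∈ [0,1], D(P^(λ)‖P₁) ≥ γ}` (sup of the empty set is 0). -/
noncomputable def E2exp (P₁ P₂ : 𝒳 → ℝ) (γ : ℝ) : ℝ :=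
  sSup {E | ∃ l ∈ Set.Icc (0:ℝ) 1, γ ≤ kl (tilt P₁ P₂ l) P₁ ∧ E = kl (tilt P₁ P₂ l) P₂}

/-- A sequential hypothesis test whose stopping time is bounded by `N`:
a stopping time `τ` for the coordinate filtration, together with decision events
`A1`, `A2` that are determined by the samples observed up to time `τ`,
are disjoint, and exhaust the sample space. -/
structure HypTest (𝒳 : Type*) (N : ℕ) where
  τ : (Fin N → 𝒳) → ℕ
  A1 : Set (Fin N → 𝒳)
  A2 : Set (Fin N → 𝒳)
  tau_le : ∀ ω, τ ω ≤ N
  stopping : ∀ ω ω', (∀ i : Fin N, (i : ℕ) < τ ω → ω i = ω' i) → τ ω' = τ ω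
  adapted1 : ∀ ω ω', (∀ i : Fin N, (i : ℕ) < τ ω → ω i = ω' i) → (ω ∈ A1 ↔ ω' ∈ A1)
  adapted2 : ∀ ω ω', (∀ i : Fin N, (i : ℕ) < τ ω → ω i = ω' i) → (ω ∈ A2 ↔ ω' ∈ A2)
  disj : Disjoint A1 A2
  exhaust : A1 ∪ A2 = Set.univ

/-- `(E₁, E₂)` is achievable by `γ`-almost-fixed-length tests. -/
def AFLAchievable (P₁ P₂ : 𝒳 → ℝ) (γ E₁ E₂ : ℝ) : Prop :=
  0 ≤ E₁ ∧ 0 ≤ E₂ ∧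
  ∃ c : ℝ, 0 < c ∧ ∃ l : ℕ, 0 < l ∧
    ∀ δ : ℝ, 0 < δ → ∃ n₀ : ℕ, ∀ n : ℕ, n₀ ≤ n →
      ∃ N : ℕ, (N : ℝ) ≤ c * (n : ℝ) ^ l ∧
        ∃ T : HypTest 𝒳 N,
          prodProb P₁ {ω | n < T.τ ω} ≤ Real.exp (-(γ * n)) ∧
          prodProb P₂ {ω | n < T.τ ω} ≤ Real.exp (-(γ * n)) ∧
          prodProb P₁ T.A2 ≤ Real.exp (-((E₁ - δ) * n)) ∧
          prodProb P₂ T.A1 ≤ Real.exp (-((E₂ - δ) * n))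

/-- `(E₁, E₂, E_Ω)` is achievable by fixed-length tests with a rejection option. -/
def RejAchievable (P₁ P₂ : 𝒳 → ℝ) (E₁ E₂ EΩ : ℝ) : Prop :=
  0 ≤ E₁ ∧ 0 ≤ E₂ ∧ 0 ≤ EΩ ∧
  ∀ δ : ℝ, 0 < δ → ∃ n₀ : ℕ, ∀ n : ℕ, n₀ ≤ n →
    ∃ A1 A2 AΩ : Set (Fin n → 𝒳),
      Disjoint A1 A2 ∧ Disjoint A1 AΩ ∧ Disjoint A2 AΩ ∧ A1 ∪ A2 ∪ AΩ = Set.univ ∧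
      prodProb P₁ A2 ≤ Real.exp (-((E₁ - δ) * n)) ∧
      prodProb P₂ A1 ≤ Real.exp (-((E₂ - δ) * n)) ∧
      prodProb P₁ AΩ + prodProb P₂ AΩ ≤ Real.exp (-((EΩ - δ) * n))

/-- Sum of the log-likelihood ratios of the first `n` samples. -/
noncomputable def S1 (P₁ P₂ : 𝒳 → ℝ) (n : ℕ) {N : ℕ} (ω : Fin N → 𝒳) : ℝ :=
  ∑ i ∈ Finset.univ.filter (fun i : Fin N => (i : ℕ) < n),
    Real.log (P₁ (ω i) / P₂ (ω i))

/-- Sum of the log-likelihood ratios of the samples after time `n`. -/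
noncomputable def S2 (P₁ P₂ : 𝒳 → ℝ) (n : ℕ) {N : ℕ} (ω : Fin N → 𝒳) : ℝ :=
  ∑ i ∈ Finset.univ.filter (fun i : Fin N => n ≤ (i : ℕ)),
    Real.log (P₁ (ω i) / P₂ (ω i))

/-- Event that the two-phase test (phase-one thresholds `α₁ > β₁`, phase-two threshold `α`)
chooses `H₁`. -/
def twoPhaseA1 (P₁ P₂ : 𝒳 → ℝ) (k n : ℕ) (α₁ β₁ α : ℝ) : Set (Fin ((k + 1) * n) → 𝒳) :=
  {ω | α₁ ≤ S1 P₁ P₂ n ω / n ∨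
    (β₁ < S1 P₁ P₂ n ω / n ∧ S1 P₁ P₂ n ω / n < α₁ ∧ α ≤ S2 P₁ P₂ n ω / (k * n))}

/-- Event that the two-phase test chooses `H₂`. -/
def twoPhaseA2 (P₁ P₂ : 𝒳 → ℝ) (k n : ℕ) (α₁ β₁ α : ℝ) : Set (Fin ((k + 1) * n) → 𝒳) :=
  {ω | S1 P₁ P₂ n ω / n ≤ β₁ ∨
    (β₁ < S1 P₁ P₂ n ω / n ∧ S1 P₁ P₂ n ω / n < α₁ ∧ S2 P₁ P₂ n ω / (k * n) < α)}

/-- Stopping time of the two-phase test: `n` if phase one is decisive, `(k+1)n` otherwise. -/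
noncomputable def twoPhaseTau (P₁ P₂ : 𝒳 → ℝ) (k n : ℕ) (α₁ β₁ : ℝ)
    (ω : Fin ((k + 1) * n) → 𝒳) : ℕ :=
  if β₁ < S1 P₁ P₂ n ω / n ∧ S1 P₁ P₂ n ω / n < α₁ then (k + 1) * n else n

namespace TPAux

set_option linter.unusedSectionVars false

noncomputable def llr (P₁ P₂ : 𝒳 → ℝ) (x : 𝒳) : ℝ := Real.log (P₁ x / P₂ x)

noncomputable def Zf (P₁ P₂ : 𝒳 → ℝ) (l : ℝ) : ℝ :=
  ∑ x, P₁ x * Real.exp (-(l * llr P₁ P₂ x))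

noncomputable def Mf (P₁ P₂ : 𝒳 → ℝ) (l : ℝ) : ℝ :=
  ∑ x, P₁ x * llr P₁ P₂ x * Real.exp (-(l * llr P₁ P₂ x))

noncomputable def Vf (P₁ P₂ : 𝒳 → ℝ) (l : ℝ) : ℝ :=
  ∑ x, P₁ x * (llr P₁ P₂ x) ^ 2 * Real.exp (-(l * llr P₁ P₂ x))

noncomputable def muf (P₁ P₂ : 𝒳 → ℝ) (l : ℝ) : ℝ := Mf P₁ P₂ l / Zf P₁ P₂ l

noncomputable def F1 (P₁ P₂ : 𝒳 → ℝ) (l : ℝ) : ℝ :=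
  -(l * muf P₁ P₂ l) - Real.log (Zf P₁ P₂ l)

noncomputable def F2 (P₁ P₂ : 𝒳 → ℝ) (l : ℝ) : ℝ :=
  (1 - l) * muf P₁ P₂ l - Real.log (Zf P₁ P₂ l)

variable {P₁ P₂ : 𝒳 → ℝ}

lemma Zf_pos (h1 : ∀ x, 0 < P₁ x) (l : ℝ) : 0 < Zf P₁ P₂ l :=
  Finset.sum_pos (fun x _ => mul_pos (h1 x) (Real.exp_pos _)) ⟨Classical.arbitrary 𝒳, mem_univ _⟩

lemma pow_eq (h1 : ∀ x, 0 < P₁ x) (h2 : ∀ x, 0 < P₂ x) (l : ℝ) (x : 𝒳) :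
    P₁ x ^ (1 - l) * P₂ x ^ l = P₁ x * Real.exp (-(l * llr P₁ P₂ x)) := by
  have hll : llr P₁ P₂ x = Real.log (P₁ x) - Real.log (P₂ x) :=
    Real.log_div (h1 x).ne' (h2 x).ne'
  calc P₁ x ^ (1 - l) * P₂ x ^ l
      = Real.exp ((1 - l) * Real.log (P₁ x) + l * Real.log (P₂ x)) := by
        rw [Real.rpow_def_of_pos (h1 x), Real.rpow_def_of_pos (h2 x), ← Real.exp_add]
        congr 1; ring
    _ = P₁ x * Real.exp (-(l * llr P₁ P₂ x)) := by
        rw [hll]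
        nth_rewrite 2 [(Real.exp_log (h1 x)).symm]
        rw [← Real.exp_add]
        congr 1; ring

lemma tilt_eq (h1 : ∀ x, 0 < P₁ x) (h2 : ∀ x, 0 < P₂ x) (l : ℝ) (x : 𝒳) :
    tilt P₁ P₂ l x = P₁ x * Real.exp (-(l * llr P₁ P₂ x)) / Zf P₁ P₂ l := by
  unfold tilt Zf
  rw [pow_eq h1 h2]
  congr 1
  exact Finset.sum_congr rfl fun a _ => pow_eq h1 h2 l a

lemma tilt_sum (h1 : ∀ x, 0 < P₁ x) (h2 : ∀ x, 0 < P₂ x) (l : ℝ) :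
    ∑ x, tilt P₁ P₂ l x = 1 := by
  simp only [tilt_eq h1 h2]
  rw [← Finset.sum_div]
  exact div_self (Zf_pos h1 l).ne'

lemma tilt_pos (h1 : ∀ x, 0 < P₁ x) (h2 : ∀ x, 0 < P₂ x) (l : ℝ) (x : 𝒳) :
    0 < tilt P₁ P₂ l x := by
  rw [tilt_eq h1 h2]
  exact div_pos (mul_pos (h1 x) (Real.exp_pos _)) (Zf_pos h1 l)

lemma kl_tilt_left (h1 : ∀ x, 0 < P₁ x) (h2 : ∀ x, 0 < P₂ x) (l : ℝ) :
    kl (tilt P₁ P₂ l) P₁ = F1 P₁ P₂ l := by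
  have hZ := Zf_pos (P₂ := P₂) h1 l
  have key : ∀ x, tilt P₁ P₂ l x * Real.log (tilt P₁ P₂ l x / P₁ x)
      = tilt P₁ P₂ l x * (-(l * llr P₁ P₂ x)) - tilt P₁ P₂ l x * Real.log (Zf P₁ P₂ l) := by
    intro x
    have ht : tilt P₁ P₂ l x / P₁ x = Real.exp (-(l * llr P₁ P₂ x)) / Zf P₁ P₂ l := by
      rw [tilt_eq h1 h2, div_div, mul_comm (Zf P₁ P₂ l), ← div_div,
        mul_comm (P₁ x), mul_div_assoc, div_self (h1 x).ne', mul_one]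
    rw [ht, Real.log_div (Real.exp_pos _).ne' hZ.ne', Real.log_exp]
    ring
  unfold kl
  rw [Finset.sum_congr rfl fun x _ => key x, Finset.sum_sub_distrib, ← Finset.sum_mul,
    tilt_sum h1 h2, one_mul, F1]
  congr 1
  have h2' : ∀ x, tilt P₁ P₂ l x * (-(l * llr P₁ P₂ x))
      = (-(l / Zf P₁ P₂ l)) * (P₁ x * llr P₁ P₂ x * Real.exp (-(l * llr P₁ P₂ x))) := by
    intro x; rw [tilt_eq h1 h2]; ring
  rw [Finset.sum_congr rfl fun x _ => h2' x, ← Finset.mul_sum]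
  simp only [muf, Mf]
  ring

lemma kl_tilt_right (h1 : ∀ x, 0 < P₁ x) (h2 : ∀ x, 0 < P₂ x) (l : ℝ) :
    kl (tilt P₁ P₂ l) P₂ = F2 P₁ P₂ l := by
  have hZ := Zf_pos (P₂ := P₂) h1 l
  have key : ∀ x, tilt P₁ P₂ l x * Real.log (tilt P₁ P₂ l x / P₂ x)
      = tilt P₁ P₂ l x * ((1 - l) * llr P₁ P₂ x) - tilt P₁ P₂ l x * Real.log (Zf P₁ P₂ l) := by
    intro x
    have ht : tilt P₁ P₂ l x / P₂ x
        = Real.exp (llr P₁ P₂ x) * Real.exp (-(l * llr P₁ P₂ x)) / Zf P₁ P₂ l := by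
      rw [tilt_eq h1 h2, div_div, mul_comm (Zf P₁ P₂ l), ← div_div]
      congr 1
      rw [llr, Real.exp_log (div_pos (h1 x) (h2 x))]
      field_simp
    rw [ht, ← Real.exp_add, Real.log_div (Real.exp_pos _).ne' hZ.ne', Real.log_exp]
    ring
  unfold kl
  rw [Finset.sum_congr rfl fun x _ => key x, Finset.sum_sub_distrib, ← Finset.sum_mul,
    tilt_sum h1 h2, one_mul, F2]
  congr 1
  have h2' : ∀ x, tilt P₁ P₂ l x * ((1 - l) * llr P₁ P₂ x)
      = ((1 - l) / Zf P₁ P₂ l) * (P₁ x * llr P₁ P₂ x * Real.exp (-(l * llr P₁ P₂ x))) := by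
    intro x; rw [tilt_eq h1 h2]; ring
  rw [Finset.sum_congr rfl fun x _ => h2' x, ← Finset.mul_sum]
  simp only [muf, Mf]
  ring


lemma llr_nonconst (h1 : ∀ x, 0 < P₁ x) (h2 : ∀ x, 0 < P₂ x)
    (h1sum : ∑ x, P₁ x = 1) (h2sum : ∑ x, P₂ x = 1) (hne : P₁ ≠ P₂) :
    ∃ x y, llr P₁ P₂ x ≠ llr P₁ P₂ y := by
  by_contra hc
  push_neg at hc
  set x₀ := Classical.arbitrary 𝒳
  have key : ∀ x, P₁ x = Real.exp (llr P₁ P₂ x₀) * P₂ x := by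
    intro x
    have h := hc x x₀
    have : P₁ x / P₂ x = Real.exp (llr P₁ P₂ x₀) := by
      rw [← h, llr, Real.exp_log (div_pos (h1 x) (h2 x))]
    rw [div_eq_iff (h2 x).ne'] at this
    exact this
  have hsum : ∑ x, P₁ x = Real.exp (llr P₁ P₂ x₀) * ∑ x, P₂ x := by
    rw [Finset.mul_sum]
    exact Finset.sum_congr rfl fun x _ => key x
  rw [h1sum, h2sum, mul_one] at hsum
  apply hne
  funext x
  rw [key x, ← hsum, one_mul]

lemma var_pos (h1 : ∀ x, 0 < P₁ x) (h2 : ∀ x, 0 < P₂ x)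
    (h1sum : ∑ x, P₁ x = 1) (h2sum : ∑ x, P₂ x = 1) (hne : P₁ ≠ P₂) (l : ℝ) :
    (Mf P₁ P₂ l) ^ 2 < Vf P₁ P₂ l * Zf P₁ P₂ l := by
  obtain ⟨x₀, y₀, hxy⟩ := llr_nonconst h1 h2 h1sum h2sum hne
  set w : 𝒳 → ℝ := fun x => P₁ x * Real.exp (-(l * llr P₁ P₂ x)) with hw_def
  have hw : ∀ x, 0 < w x := fun x => mul_pos (h1 x) (Real.exp_pos _)
  set g : 𝒳 → ℝ := llr P₁ P₂ with hg_def
  have hM : Mf P₁ P₂ l = ∑ x, w x * g x := by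
    apply Finset.sum_congr rfl; intro x _; simp only [hw_def, hg_def]; ring
  have hV : Vf P₁ P₂ l = ∑ x, w x * g x ^ 2 := by
    apply Finset.sum_congr rfl; intro x _; simp only [hw_def, hg_def]; ring
  have hZ : Zf P₁ P₂ l = ∑ x, w x := rfl
  rw [hM, hV, hZ]
  have key : ∑ x, ∑ y, w x * w y * (g x - g y) ^ 2
      = 2 * ((∑ x, w x * g x ^ 2) * (∑ x, w x) - (∑ x, w x * g x) ^ 2) := by
    have expand : ∀ x y : 𝒳, w x * w y * (g x - g y) ^ 2
        = (w x * g x ^ 2) * w y + w x * (w y * g y ^ 2) - 2 * ((w x * g x) * (w y * g y)) := by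
      intros; ring
    simp only [expand, Finset.sum_sub_distrib, Finset.sum_add_distrib, ← Finset.sum_mul,
      ← Finset.mul_sum]
    ring
  have hpos : 0 < ∑ x, ∑ y, w x * w y * (g x - g y) ^ 2 := by
    apply Finset.sum_pos'
    · intro x _
      exact Finset.sum_nonneg fun y _ =>
        mul_nonneg (mul_nonneg (hw x).le (hw y).le) (sq_nonneg _)
    · refine ⟨x₀, mem_univ _, Finset.sum_pos' (fun y _ =>
        mul_nonneg (mul_nonneg (hw x₀).le (hw y).le) (sq_nonneg _)) ⟨y₀, mem_univ _, ?_⟩⟩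
      have hne0 : g x₀ - g y₀ ≠ 0 := sub_ne_zero.mpr hxy
      exact mul_pos (mul_pos (hw x₀) (hw y₀)) (by positivity)
  nlinarith [key, hpos]

lemma hasDerivAt_Zf (l : ℝ) : HasDerivAt (Zf P₁ P₂) (-(Mf P₁ P₂ l)) l := by
  have : ∀ x ∈ (univ : Finset 𝒳), HasDerivAt (fun t => P₁ x * Real.exp (-(t * llr P₁ P₂ x)))
      (-(P₁ x * llr P₁ P₂ x * Real.exp (-(l * llr P₁ P₂ x)))) l := by
    intro x _
    have h : HasDerivAt (fun t : ℝ => -(t * llr P₁ P₂ x)) (-llr P₁ P₂ x) l :=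
      (hasDerivAt_mul_const (llr P₁ P₂ x)).neg
    have := (h.exp.const_mul (P₁ x))
    exact this.congr_deriv (by ring)
  have hsum := HasDerivAt.fun_sum this
  refine hsum.congr_deriv ?_
  rw [Mf, ← Finset.sum_neg_distrib]

lemma hasDerivAt_Mf (l : ℝ) : HasDerivAt (Mf P₁ P₂) (-(Vf P₁ P₂ l)) l := by
  have : ∀ x ∈ (univ : Finset 𝒳),
      HasDerivAt (fun t => P₁ x * llr P₁ P₂ x * Real.exp (-(t * llr P₁ P₂ x)))
      (-(P₁ x * (llr P₁ P₂ x) ^ 2 * Real.exp (-(l * llr P₁ P₂ x)))) l := by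
    intro x _
    have h : HasDerivAt (fun t : ℝ => -(t * llr P₁ P₂ x)) (-llr P₁ P₂ x) l :=
      (hasDerivAt_mul_const (llr P₁ P₂ x)).neg
    have := (h.exp.const_mul (P₁ x * llr P₁ P₂ x))
    exact this.congr_deriv (by ring)
  have hsum := HasDerivAt.fun_sum this
  refine hsum.congr_deriv ?_
  rw [Vf, ← Finset.sum_neg_distrib]

lemma hasDerivAt_muf (h1 : ∀ x, 0 < P₁ x) (l : ℝ) :
    HasDerivAt (muf P₁ P₂) ((Mf P₁ P₂ l ^ 2 - Vf P₁ P₂ l * Zf P₁ P₂ l) / Zf P₁ P₂ l ^ 2) l := by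
  have h := (hasDerivAt_Mf (P₁ := P₁) (P₂ := P₂) l).div
    (hasDerivAt_Zf (P₁ := P₁) (P₂ := P₂) l) (Zf_pos (P₂ := P₂) h1 l).ne'
  exact h.congr_deriv (by ring)

lemma hasDerivAt_F1 (h1 : ∀ x, 0 < P₁ x) (l : ℝ) :
    HasDerivAt (F1 P₁ P₂)
      (-(l * ((Mf P₁ P₂ l ^ 2 - Vf P₁ P₂ l * Zf P₁ P₂ l) / Zf P₁ P₂ l ^ 2))) l := by
  have hμ := hasDerivAt_muf (P₂ := P₂) h1 l
  have hlog := (hasDerivAt_Zf (P₁ := P₁) (P₂ := P₂) l).log (Zf_pos h1 l).ne'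
  have h := (((hasDerivAt_id l).mul hμ).neg).sub hlog
  refine h.congr_deriv ?_
  have hZ := (Zf_pos (P₂ := P₂) h1 l).ne'
  simp only [muf, id, Pi.sub_apply]
  field_simp
  ring

lemma hasDerivAt_F2 (h1 : ∀ x, 0 < P₁ x) (l : ℝ) :
    HasDerivAt (F2 P₁ P₂)
      ((1 - l) * ((Mf P₁ P₂ l ^ 2 - Vf P₁ P₂ l * Zf P₁ P₂ l) / Zf P₁ P₂ l ^ 2)) l := by
  have hμ := hasDerivAt_muf (P₂ := P₂) h1 l
  have hlog := (hasDerivAt_Zf (P₁ := P₁) (P₂ := P₂) l).log (Zf_pos h1 l).ne'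
  have h := (((hasDerivAt_const l (1:ℝ)).sub (hasDerivAt_id l)).mul hμ).sub hlog
  refine h.congr_deriv ?_
  have hZ := (Zf_pos (P₂ := P₂) h1 l).ne'
  simp only [muf, id, Pi.sub_apply]
  field_simp
  ring

lemma continuous_F1 (h1 : ∀ x, 0 < P₁ x) : Continuous (F1 P₁ P₂) :=
  continuous_iff_continuousAt.2 fun l => (hasDerivAt_F1 h1 l).differentiableAt.continuousAt

lemma continuous_F2 (h1 : ∀ x, 0 < P₁ x) : Continuous (F2 P₁ P₂) :=
  continuous_iff_continuousAt.2 fun l => (hasDerivAt_F2 h1 l).differentiableAt.continuousAt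

lemma strictMonoOn_F1 (h1 : ∀ x, 0 < P₁ x) (h2 : ∀ x, 0 < P₂ x)
    (h1sum : ∑ x, P₁ x = 1) (h2sum : ∑ x, P₂ x = 1) (hne : P₁ ≠ P₂) :
    StrictMonoOn (F1 P₁ P₂) (Set.Icc 0 1) := by
  apply strictMonoOn_of_deriv_pos (convex_Icc 0 1) (continuous_F1 h1).continuousOn
  intro l hl
  rw [interior_Icc] at hl
  rw [(hasDerivAt_F1 h1 l).deriv]
  have hv := var_pos h1 h2 h1sum h2sum hne l
  have hZ := Zf_pos (P₂ := P₂) h1 l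
  have : (Mf P₁ P₂ l ^ 2 - Vf P₁ P₂ l * Zf P₁ P₂ l) / Zf P₁ P₂ l ^ 2 < 0 := by
    apply div_neg_of_neg_of_pos (by linarith) (by positivity)
  nlinarith [hl.1, this]

lemma strictAntiOn_F2 (h1 : ∀ x, 0 < P₁ x) (h2 : ∀ x, 0 < P₂ x)
    (h1sum : ∑ x, P₁ x = 1) (h2sum : ∑ x, P₂ x = 1) (hne : P₁ ≠ P₂) :
    StrictAntiOn (F2 P₁ P₂) (Set.Icc 0 1) := by
  apply strictAntiOn_of_deriv_neg (convex_Icc 0 1) (continuous_F2 h1).continuousOn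
  intro l hl
  rw [interior_Icc] at hl
  rw [(hasDerivAt_F2 h1 l).deriv]
  have hv := var_pos h1 h2 h1sum h2sum hne l
  have hZ := Zf_pos (P₂ := P₂) h1 l
  have : (Mf P₁ P₂ l ^ 2 - Vf P₁ P₂ l * Zf P₁ P₂ l) / Zf P₁ P₂ l ^ 2 < 0 := by
    apply div_neg_of_neg_of_pos (by linarith) (by positivity)
  nlinarith [hl.2, this]

lemma F1_zero (h1sum : ∑ x, P₁ x = 1) : F1 P₁ P₂ 0 = 0 := by
  have : Zf P₁ P₂ 0 = 1 := by
    rw [Zf]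
    simp [h1sum]
  rw [F1, this]
  simp

lemma Zf_one (h1 : ∀ x, 0 < P₁ x) (h2 : ∀ x, 0 < P₂ x) (h2sum : ∑ x, P₂ x = 1) :
    Zf P₁ P₂ 1 = 1 := by
  have key : ∀ x : 𝒳, P₁ x * Real.exp (-((1:ℝ) * llr P₁ P₂ x)) = P₂ x := by
    intro x
    rw [one_mul, llr, Real.exp_neg, Real.exp_log (div_pos (h1 x) (h2 x)), inv_div,
      mul_comm (P₁ x), div_mul_eq_mul_div, mul_div_assoc, div_self (h1 x).ne', mul_one]
  rw [Zf, Finset.sum_congr rfl fun x _ => key x, h2sum]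

lemma F2_one (h1 : ∀ x, 0 < P₁ x) (h2 : ∀ x, 0 < P₂ x) (h2sum : ∑ x, P₂ x = 1) :
    F2 P₁ P₂ 1 = 0 := by
  rw [F2, Zf_one h1 h2 h2sum]
  simp

lemma F2_sub_F1 (l : ℝ) : F2 P₁ P₂ l - F1 P₁ P₂ l = muf P₁ P₂ l := by
  rw [F1, F2]; ring

lemma Z2_eq (h1 : ∀ x, 0 < P₁ x) (h2 : ∀ x, 0 < P₂ x) (l : ℝ) :
    ∑ x, P₂ x * Real.exp ((1 - l) * llr P₁ P₂ x) = Zf P₁ P₂ l := by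
  apply Finset.sum_congr rfl
  intro x _
  have : P₂ x = P₁ x * Real.exp (-llr P₁ P₂ x) := by
    rw [llr, Real.exp_neg, Real.exp_log (div_pos (h1 x) (h2 x)), inv_div, mul_comm (P₁ x),
      div_mul_eq_mul_div, mul_div_assoc, div_self (h1 x).ne', mul_one]
  rw [this, mul_assoc, ← Real.exp_add]
  congr 2
  ring

lemma prodProb_mono {P : 𝒳 → ℝ} (hP : ∀ x, 0 ≤ P x) {N : ℕ} {A B : Set (Fin N → 𝒳)}
    (h : A ⊆ B) : prodProb P A ≤ prodProb P B := by
  apply Finset.sum_le_sum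
  intro ω _
  exact Set.indicator_le_indicator_of_subset h
    (fun ω' => Finset.prod_nonneg fun i _ => hP (ω' i)) ω

lemma prodProb_union_le {P : 𝒳 → ℝ} (hP : ∀ x, 0 ≤ P x) {N : ℕ} (A B : Set (Fin N → 𝒳)) :
    prodProb P (A ∪ B) ≤ prodProb P A + prodProb P B := by
  rw [prodProb, prodProb, prodProb, ← Finset.sum_add_distrib]
  apply Finset.sum_le_sum
  intro ω _
  have hf : (0:ℝ) ≤ ∏ i, P (ω i) := Finset.prod_nonneg fun i _ => hP (ω i)
  by_cases hA : ω ∈ A <;> by_cases hB : ω ∈ B <;>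
    simp [Set.indicator, hA, hB, hf]

lemma card_filter_lt {N n : ℕ} (h : n ≤ N) :
    ((univ : Finset (Fin N)).filter (fun i : Fin N => (i:ℕ) < n)).card = n := by
  have : (univ : Finset (Fin N)).filter (fun i : Fin N => (i:ℕ) < n)
      = Finset.map (Fin.castLEEmb h) univ := by
    ext i
    simp only [Finset.mem_filter, Finset.mem_map, Finset.mem_univ, true_and]
    constructor
    · intro hi
      exact ⟨⟨i, hi⟩, rfl⟩
    · rintro ⟨j, -, rfl⟩
      simpa using j.isLt
  rw [this, Finset.card_map, Finset.card_univ, Fintype.card_fin]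

lemma card_filter_not_lt {N n : ℕ} (h : n ≤ N) :
    ((univ : Finset (Fin N)).filter (fun i : Fin N => ¬ (i:ℕ) < n)).card = N - n := by
  have : (univ : Finset (Fin N)).filter (fun i : Fin N => ¬ (i:ℕ) < n)
      = Finset.map ⟨fun j : Fin (N - n) => (⟨n + j, by omega⟩ : Fin N), fun a b hab => by
          rw [Fin.ext_iff] at hab
          simp only [] at hab
          exact Fin.ext (by omega)⟩ univ := by
    ext i
    simp only [Finset.mem_filter, Finset.mem_map, Finset.mem_univ, true_and, not_lt,
      Function.Embedding.coeFn_mk]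
    constructor
    · intro hi
      refine ⟨⟨(i:ℕ) - n, by omega⟩, ?_⟩
      exact Fin.ext (by show n + ((i:ℕ) - n) = (i:ℕ); omega)
    · rintro ⟨j, rfl⟩
      show n ≤ n + (j:ℕ); omega
  rw [this, Finset.card_map, Finset.card_univ, Fintype.card_fin]

lemma chernoff (P : 𝒳 → ℝ) (hP : ∀ x, 0 < P x) (n k : ℕ) (u₁ u₂ C : ℝ)
    (E : Set (Fin ((k+1)*n) → 𝒳))
    (hE : ∀ ω ∈ E, 0 ≤ u₁ * S1 P₁ P₂ n ω + u₂ * S2 P₁ P₂ n ω + C) :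
    prodProb P E ≤ Real.exp C * (∑ x, P x * Real.exp (u₁ * llr P₁ P₂ x)) ^ n *
      (∑ x, P x * Real.exp (u₂ * llr P₁ P₂ x)) ^ (k * n) := by
  have hnN : n ≤ (k+1)*n := by nlinarith [Nat.zero_le (k*n)]
  set θ : Fin ((k+1)*n) → ℝ := fun i => if (i:ℕ) < n then u₁ else u₂ with hθ
  have hfilter : (univ.filter fun i : Fin ((k+1)*n) => n ≤ (i:ℕ))
      = univ.filter fun i : Fin ((k+1)*n) => ¬ (i:ℕ) < n := by
    apply Finset.filter_congr; intro i _; simp [not_lt]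
  have hθsum : ∀ ω : Fin ((k+1)*n) → 𝒳,
      u₁ * S1 P₁ P₂ n ω + u₂ * S2 P₁ P₂ n ω = ∑ i, θ i * llr P₁ P₂ (ω i) := by
    intro ω
    rw [S1, S2, Finset.mul_sum, Finset.mul_sum, hfilter,
      ← Finset.sum_filter_add_sum_filter_not univ (fun i : Fin ((k+1)*n) => (i:ℕ) < n)
        (fun i => θ i * llr P₁ P₂ (ω i))]
    congr 1
    · apply Finset.sum_congr rfl
      intro i hi
      rw [Finset.mem_filter] at hi
      simp only [hθ, if_pos hi.2, llr]
    · apply Finset.sum_congr rfl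
      intro i hi
      rw [Finset.mem_filter] at hi
      simp only [hθ, if_neg hi.2, llr]
  have hcard1 : ((univ : Finset (Fin ((k+1)*n))).filter (fun i : Fin ((k+1)*n) => (i:ℕ) < n)).card = n :=
    card_filter_lt hnN
  have hcard2 : ((univ : Finset (Fin ((k+1)*n))).filter (fun i : Fin ((k+1)*n) => ¬ (i:ℕ) < n)).card = k * n := by
    rw [card_filter_not_lt hnN, Nat.succ_mul, Nat.add_sub_cancel]
  calc prodProb P E
      ≤ ∑ ω : Fin ((k+1)*n) → 𝒳, Real.exp (∑ i, θ i * llr P₁ P₂ (ω i) + C) * ∏ i, P (ω i) := by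
        apply Finset.sum_le_sum
        intro ω _
        by_cases hω : ω ∈ E
        · rw [Set.indicator_of_mem hω]
          have h0 : 0 ≤ ∑ i, θ i * llr P₁ P₂ (ω i) + C := by
            rw [← hθsum]; exact hE ω hω
          have h1 : (1:ℝ) ≤ Real.exp (∑ i, θ i * llr P₁ P₂ (ω i) + C) := by
            rw [← Real.exp_zero]; exact Real.exp_le_exp.2 h0
          exact le_mul_of_one_le_left (Finset.prod_nonneg fun i _ => (hP (ω i)).le) h1
        · rw [Set.indicator_of_notMem hω]
          exact mul_nonneg (Real.exp_pos _).le (Finset.prod_nonneg fun i _ => (hP (ω i)).le)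
    _ = Real.exp C * ∑ ω : Fin ((k+1)*n) → 𝒳, ∏ i, (P (ω i) * Real.exp (θ i * llr P₁ P₂ (ω i))) := by
        rw [Finset.mul_sum]
        apply Finset.sum_congr rfl
        intro ω _
        rw [Real.exp_add, Real.exp_sum, Finset.prod_mul_distrib]
        ring
    _ = Real.exp C * ∏ i : Fin ((k+1)*n), ∑ x, P x * Real.exp (θ i * llr P₁ P₂ x) := by
        rw [Fintype.prod_sum
          (fun (i : Fin ((k+1)*n)) (x : 𝒳) => P x * Real.exp (θ i * llr P₁ P₂ x))]
    _ = Real.exp C * (∑ x, P x * Real.exp (u₁ * llr P₁ P₂ x)) ^ n *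
          (∑ x, P x * Real.exp (u₂ * llr P₁ P₂ x)) ^ (k * n) := by
        have e1 : (∏ i ∈ filter (fun i : Fin ((k+1)*n) => (i:ℕ) < n) univ,
            ∑ x, P x * Real.exp (θ i * llr P₁ P₂ x))
            = (∑ x, P x * Real.exp (u₁ * llr P₁ P₂ x)) ^ n := by
          have step : (∏ i ∈ filter (fun i : Fin ((k+1)*n) => (i:ℕ) < n) univ,
              ∑ x, P x * Real.exp (θ i * llr P₁ P₂ x))
              = ∏ _i ∈ filter (fun i : Fin ((k+1)*n) => (i:ℕ) < n) univ,
                ∑ x, P x * Real.exp (u₁ * llr P₁ P₂ x) := by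
            apply Finset.prod_congr rfl
            intro i hi
            rw [Finset.mem_filter] at hi
            simp only [hθ, if_pos hi.2]
          rw [step, Finset.prod_const, hcard1]
        have e2 : (∏ i ∈ filter (fun i : Fin ((k+1)*n) => ¬ (i:ℕ) < n) univ,
            ∑ x, P x * Real.exp (θ i * llr P₁ P₂ x))
            = (∑ x, P x * Real.exp (u₂ * llr P₁ P₂ x)) ^ (k * n) := by
          have step : (∏ i ∈ filter (fun i : Fin ((k+1)*n) => ¬ (i:ℕ) < n) univ,
              ∑ x, P x * Real.exp (θ i * llr P₁ P₂ x))
              = ∏ _i ∈ filter (fun i : Fin ((k+1)*n) => ¬ (i:ℕ) < n) univ,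
                ∑ x, P x * Real.exp (u₂ * llr P₁ P₂ x) := by
            apply Finset.prod_congr rfl
            intro i hi
            rw [Finset.mem_filter] at hi
            simp only [hθ, if_neg hi.2]
          rw [step, Finset.prod_const, hcard2]
        rw [← Finset.prod_filter_mul_prod_filter_not univ
          (fun i : Fin ((k+1)*n) => (i:ℕ) < n), e1, e2, mul_assoc]

lemma exp_pow_eq (h1 : ∀ x, 0 < P₁ x) (l : ℝ) (m : ℕ) :
    Zf P₁ P₂ l ^ m = Real.exp ((m:ℝ) * Real.log (Zf P₁ P₂ l)) := by
  rw [← Real.exp_log (Zf_pos (P₂ := P₂) h1 l), Real.exp_nat_mul, Real.log_exp]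

lemma sum_exp_neg (l : ℝ) :
    ∑ x, P₁ x * Real.exp ((-l) * llr P₁ P₂ x) = Zf P₁ P₂ l := by
  apply Finset.sum_congr rfl
  intro x _
  congr 1
  ring

lemma sum_exp_one_sub (h1 : ∀ x, 0 < P₁ x) (h2 : ∀ x, 0 < P₂ x) (l : ℝ) :
    ∑ x, P₂ x * Real.exp ((1 - l) * llr P₁ P₂ x) = Zf P₁ P₂ l := Z2_eq h1 h2 l

lemma sum_exp_zero_1 (h1sum : ∑ x, P₁ x = 1) :
    ∑ x, P₁ x * Real.exp ((0:ℝ) * llr P₁ P₂ x) = 1 := by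
  simp [h1sum]

lemma sum_exp_zero_2 (h2sum : ∑ x, P₂ x = 1) :
    ∑ x, P₂ x * Real.exp ((0:ℝ) * llr P₁ P₂ x) = 1 := by
  simp [h2sum]

lemma bound_P1_one (h1 : ∀ x, 0 < P₁ x) (h1sum : ∑ x, P₁ x = 1)
    (n k : ℕ) (l a : ℝ) (hl : 0 ≤ l)
    (E : Set (Fin ((k+1)*n) → 𝒳)) (hE : ∀ ω ∈ E, S1 P₁ P₂ n ω ≤ (n:ℝ) * a) :
    prodProb P₁ E ≤ Real.exp (-((n:ℝ) * (-(l * a) - Real.log (Zf P₁ P₂ l)))) := by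
  have h := chernoff (P₁ := P₁) (P₂ := P₂) P₁ h1 n k (-l) 0 (l * ((n:ℝ) * a)) E (by
    intro ω hω
    nlinarith [mul_nonneg hl (sub_nonneg.2 (hE ω hω))])
  rw [sum_exp_neg, sum_exp_zero_1 h1sum, one_pow, mul_one, exp_pow_eq h1,
    ← Real.exp_add] at h
  refine h.trans (le_of_eq ?_)
  congr 1
  ring

lemma bound_P1_two (h1 : ∀ x, 0 < P₁ x)
    (n k : ℕ) (l lam a b : ℝ) (hl : 0 ≤ l) (hlam : 0 ≤ lam)
    (E : Set (Fin ((k+1)*n) → 𝒳))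
    (hE : ∀ ω ∈ E, S1 P₁ P₂ n ω ≤ (n:ℝ) * a ∧ S2 P₁ P₂ n ω ≤ ((k*n : ℕ):ℝ) * b) :
    prodProb P₁ E ≤ Real.exp (-((n:ℝ) * (-(l * a) - Real.log (Zf P₁ P₂ l))
      + ((k*n : ℕ):ℝ) * (-(lam * b) - Real.log (Zf P₁ P₂ lam)))) := by
  have h := chernoff (P₁ := P₁) (P₂ := P₂) P₁ h1 n k (-l) (-lam)
    (l * ((n:ℝ) * a) + lam * (((k*n : ℕ):ℝ) * b)) E (by
    intro ω hω
    nlinarith [mul_nonneg hl (sub_nonneg.2 (hE ω hω).1),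
      mul_nonneg hlam (sub_nonneg.2 (hE ω hω).2)])
  rw [sum_exp_neg, sum_exp_neg, exp_pow_eq h1, exp_pow_eq h1,
    ← Real.exp_add, ← Real.exp_add] at h
  refine h.trans (le_of_eq ?_)
  congr 1
  push_cast
  ring

lemma bound_P2_one (h1 : ∀ x, 0 < P₁ x) (h2 : ∀ x, 0 < P₂ x) (h2sum : ∑ x, P₂ x = 1)
    (n k : ℕ) (l a : ℝ) (hl : l ≤ 1)
    (E : Set (Fin ((k+1)*n) → 𝒳)) (hE : ∀ ω ∈ E, (n:ℝ) * a ≤ S1 P₁ P₂ n ω) :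
    prodProb P₂ E ≤ Real.exp (-((n:ℝ) * ((1 - l) * a - Real.log (Zf P₁ P₂ l)))) := by
  have h := chernoff (P₁ := P₁) (P₂ := P₂) P₂ h2 n k (1 - l) 0 (-((1 - l) * ((n:ℝ) * a))) E (by
    intro ω hω
    nlinarith [mul_nonneg (by linarith : (0:ℝ) ≤ 1 - l) (sub_nonneg.2 (hE ω hω))])
  rw [sum_exp_one_sub h1 h2, sum_exp_zero_2 h2sum, one_pow, mul_one, exp_pow_eq h1,
    ← Real.exp_add] at h
  refine h.trans (le_of_eq ?_)
  congr 1
  ring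

lemma bound_P2_two (h1 : ∀ x, 0 < P₁ x) (h2 : ∀ x, 0 < P₂ x)
    (n k : ℕ) (l lam a b : ℝ) (hl : l ≤ 1) (hlam : lam ≤ 1)
    (E : Set (Fin ((k+1)*n) → 𝒳))
    (hE : ∀ ω ∈ E, (n:ℝ) * a ≤ S1 P₁ P₂ n ω ∧ ((k*n : ℕ):ℝ) * b ≤ S2 P₁ P₂ n ω) :
    prodProb P₂ E ≤ Real.exp (-((n:ℝ) * ((1 - l) * a - Real.log (Zf P₁ P₂ l))
      + ((k*n : ℕ):ℝ) * ((1 - lam) * b - Real.log (Zf P₁ P₂ lam)))) := by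
  have h := chernoff (P₁ := P₁) (P₂ := P₂) P₂ h2 n k (1 - l) (1 - lam)
    (-((1 - l) * ((n:ℝ) * a)) + -((1 - lam) * (((k*n : ℕ):ℝ) * b))) E (by
    intro ω hω
    nlinarith [mul_nonneg (by linarith : (0:ℝ) ≤ 1 - l) (sub_nonneg.2 (hE ω hω).1),
      mul_nonneg (by linarith : (0:ℝ) ≤ 1 - lam) (sub_nonneg.2 (hE ω hω).2)])
  rw [sum_exp_one_sub h1 h2, sum_exp_one_sub h1 h2, exp_pow_eq h1, exp_pow_eq h1,
    ← Real.exp_add, ← Real.exp_add] at h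
  refine h.trans (le_of_eq ?_)
  congr 1
  push_cast
  ring
end TPAux

set_option maxHeartbeats 1000000 in
/-- Proposition 1 (achievability of the two-phase region): every pair in
`([0,E₁(γ)] × [0,E₂(γ)]) ∩ ((γ,γ) + k·R_FD)` is achievable by two-phase tests. -/
theorem twoPhase_achievability (P₁ P₂ : 𝒳 → ℝ)
    (h1pos : ∀ x, 0 < P₁ x) (h2pos : ∀ x, 0 < P₂ x)
    (h1sum : ∑ x, P₁ x = 1) (h2sum : ∑ x, P₂ x = 1)
    (hne : P₁ ≠ P₂)
    (ls : ℝ) (hls : ls ∈ Set.Icc (0:ℝ) 1)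
    (hchern : kl (tilt P₁ P₂ ls) P₁ = kl (tilt P₁ P₂ ls) P₂)
    (γ : ℝ) (hγ0 : 0 < γ) (hγD : γ < kl (tilt P₁ P₂ ls) P₁)
    (k : ℕ) (hk : 0 < k)
    (E₁ E₂ : ℝ)
    (hE : (E₁, E₂) ∈ (Set.Icc 0 (E1exp P₁ P₂ γ) ×ˢ Set.Icc 0 (E2exp P₁ P₂ γ)) ∩
      {p : ℝ × ℝ | ∃ q ∈ RFD P₁ P₂, p = (γ + k * q.1, γ + k * q.2)}) :
    ∀ δ : ℝ, 0 < δ → ∃ n₀ : ℕ, ∀ n : ℕ, n₀ ≤ n →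
      ∃ l₁ ∈ Set.Icc (0:ℝ) 1, ∃ l₂ ∈ Set.Icc (0:ℝ) 1, ∃ lam ∈ Set.Icc (0:ℝ) 1,
        l₂ ≤ l₁ ∧
        min (kl (tilt P₁ P₂ l₁) P₂) (kl (tilt P₁ P₂ l₂) P₁) = γ ∧
        prodProb P₁ (twoPhaseA2 P₁ P₂ k n
            (kl (tilt P₁ P₂ l₂) P₂ - kl (tilt P₁ P₂ l₂) P₁)
            (kl (tilt P₁ P₂ l₁) P₂ - kl (tilt P₁ P₂ l₁) P₁)
            (kl (tilt P₁ P₂ lam) P₂ - kl (tilt P₁ P₂ lam) P₁))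
          ≤ Real.exp (-((E₁ - δ) * n)) ∧
        prodProb P₂ (twoPhaseA1 P₁ P₂ k n
            (kl (tilt P₁ P₂ l₂) P₂ - kl (tilt P₁ P₂ l₂) P₁)
            (kl (tilt P₁ P₂ l₁) P₂ - kl (tilt P₁ P₂ l₁) P₁)
            (kl (tilt P₁ P₂ lam) P₂ - kl (tilt P₁ P₂ lam) P₁))
          ≤ Real.exp (-((E₂ - δ) * n)) := by
  classical
  obtain ⟨⟨hE₁mem, hE₂mem⟩, q, hqRFD, hpq⟩ := hE
  obtain ⟨hq10, hq20, lam, hlam01, hq1le, hq2le⟩ := hqRFD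
  rw [Prod.mk.injEq] at hpq
  obtain ⟨hE1eq, hE2eq⟩ := hpq
  have kl1 : ∀ l, kl (tilt P₁ P₂ l) P₁ = TPAux.F1 P₁ P₂ l := TPAux.kl_tilt_left h1pos h2pos
  have kl2 : ∀ l, kl (tilt P₁ P₂ l) P₂ = TPAux.F2 P₁ P₂ l := TPAux.kl_tilt_right h1pos h2pos
  rw [kl1, kl2] at hchern
  rw [kl1] at hγD hq1le
  rw [kl2] at hq2le
  have hcont1 := TPAux.continuous_F1 (P₂ := P₂) h1pos
  have hcont2 := TPAux.continuous_F2 (P₂ := P₂) h1pos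
  have hmono := TPAux.strictMonoOn_F1 h1pos h2pos h1sum h2sum hne
  have hanti := TPAux.strictAntiOn_F2 h1pos h2pos h1sum h2sum hne
  obtain ⟨l₂, hl₂mem, hl₂⟩ : γ ∈ TPAux.F1 P₁ P₂ '' Set.Icc 0 ls := by
    apply intermediate_value_Icc hls.1 hcont1.continuousOn
    rw [TPAux.F1_zero h1sum]
    exact ⟨hγ0.le, hγD.le⟩
  obtain ⟨l₁, hl₁mem, hl₁⟩ : γ ∈ TPAux.F2 P₁ P₂ '' Set.Icc ls 1 := by
    apply intermediate_value_Icc' hls.2 hcont2.continuousOn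
    rw [TPAux.F2_one h1pos h2pos h2sum]
    exact ⟨hγ0.le, by rw [← hchern]; exact hγD.le⟩
  have hl₂01 : l₂ ∈ Set.Icc (0:ℝ) 1 := ⟨hl₂mem.1, hl₂mem.2.trans hls.2⟩
  have hl₁01 : l₁ ∈ Set.Icc (0:ℝ) 1 := ⟨hls.1.trans hl₁mem.1, hl₁mem.2⟩
  have hl₂l₁ : l₂ ≤ l₁ := hl₂mem.2.trans hl₁mem.1
  have hγF1l₁ : γ ≤ TPAux.F1 P₁ P₂ l₁ := by
    have := hmono.monotoneOn hl₂01 hl₁01 hl₂l₁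
    rw [hl₂] at this
    exact this
  have hγF2l₂ : γ ≤ TPAux.F2 P₁ P₂ l₂ := by
    have := hanti.antitoneOn hl₂01 hl₁01 hl₂l₁
    rw [hl₁] at this
    exact this
  have hE1le : E₁ ≤ TPAux.F1 P₁ P₂ l₁ := by
    refine hE₁mem.2.trans ?_
    rw [E1exp]
    apply Real.sSup_le
    · rintro e ⟨l, hl01, hγle, rfl⟩
      rw [kl2] at hγle
      rw [kl1]
      have hll₁ : l ≤ l₁ := by
        by_contra hlt
        push_neg at hlt
        have := hanti hl₁01 hl01 hlt
        rw [hl₁] at this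
        linarith
      exact hmono.monotoneOn hl01 hl₁01 hll₁
    · linarith
  have hE2le : E₂ ≤ TPAux.F2 P₁ P₂ l₂ := by
    refine hE₂mem.2.trans ?_
    rw [E2exp]
    apply Real.sSup_le
    · rintro e ⟨l, hl01, hγle, rfl⟩
      rw [kl1] at hγle
      rw [kl2]
      have hll₂ : l₂ ≤ l := by
        by_contra hlt
        push_neg at hlt
        have := hmono hl01 hl₂01 hlt
        rw [hl₂] at this
        linarith
      exact hanti.antitoneOn hl₂01 hl01 hll₂
    · linarith
  intro δ hδ
  refine ⟨max 1 ⌈Real.log 2 / δ⌉₊, fun n hn => ?_⟩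
  have hn1 : 1 ≤ n := le_trans (le_max_left _ _) hn
  have hnR : (0:ℝ) < n := by exact_mod_cast hn1
  have hkR : (0:ℝ) < k := by exact_mod_cast hk
  have hknR : (0:ℝ) < (k:ℝ) * n := mul_pos hkR hnR
  have hlog2 : Real.log 2 ≤ δ * n := by
    have h1 : Real.log 2 / δ ≤ (n:ℝ) := by
      refine (Nat.le_ceil _).trans ?_
      exact_mod_cast le_trans (le_max_right _ _) hn
    calc Real.log 2 = Real.log 2 / δ * δ := by field_simp
      _ ≤ (n:ℝ) * δ := mul_le_mul_of_nonneg_right h1 hδ.le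
      _ = δ * n := mul_comm _ _
  have hP1nn : ∀ x, 0 ≤ P₁ x := fun x => (h1pos x).le
  have hP2nn : ∀ x, 0 ≤ P₂ x := fun x => (h2pos x).le
  have twoexp : ∀ E : ℝ, 2 * Real.exp (-(E * n)) ≤ Real.exp (-((E - δ) * n)) := by
    intro E
    rw [show (2:ℝ) = Real.exp (Real.log 2) from (Real.exp_log two_pos).symm, ← Real.exp_add]
    apply Real.exp_le_exp.2
    nlinarith [hlog2]
  refine ⟨l₁, hl₁01, l₂, hl₂01, lam, hlam01, hl₂l₁, ?_, ?_, ?_⟩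
  · rw [kl2, kl1, hl₁, hl₂, min_self]
  · -- P₁ error bound
    simp only [kl1, kl2, TPAux.F2_sub_F1]
    have hsub : twoPhaseA2 P₁ P₂ k n (TPAux.muf P₁ P₂ l₂) (TPAux.muf P₁ P₂ l₁)
        (TPAux.muf P₁ P₂ lam) ⊆
        {ω : Fin ((k+1)*n) → 𝒳 | S1 P₁ P₂ n ω ≤ (n:ℝ) * TPAux.muf P₁ P₂ l₁} ∪
        {ω : Fin ((k+1)*n) → 𝒳 | S1 P₁ P₂ n ω ≤ (n:ℝ) * TPAux.muf P₁ P₂ l₂ ∧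
          S2 P₁ P₂ n ω ≤ ((k*n : ℕ):ℝ) * TPAux.muf P₁ P₂ lam} := by
      intro ω hω
      simp only [twoPhaseA2, Set.mem_setOf_eq] at hω
      rcases hω with h | ⟨hb, ha, hs⟩
      · left
        show S1 P₁ P₂ n ω ≤ _
        rw [div_le_iff₀ hnR] at h
        linarith
      · right
        refine ⟨?_, ?_⟩
        · rw [div_lt_iff₀ hnR] at ha
          linarith
        · rw [div_lt_iff₀ hknR] at hs
          push_cast
          linarith
    calc prodProb P₁ (twoPhaseA2 P₁ P₂ k n (TPAux.muf P₁ P₂ l₂) (TPAux.muf P₁ P₂ l₁)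
            (TPAux.muf P₁ P₂ lam))
        ≤ prodProb P₁ ({ω : Fin ((k+1)*n) → 𝒳 | S1 P₁ P₂ n ω ≤ (n:ℝ) * TPAux.muf P₁ P₂ l₁} ∪
          {ω : Fin ((k+1)*n) → 𝒳 | S1 P₁ P₂ n ω ≤ (n:ℝ) * TPAux.muf P₁ P₂ l₂ ∧
            S2 P₁ P₂ n ω ≤ ((k*n : ℕ):ℝ) * TPAux.muf P₁ P₂ lam}) :=
          TPAux.prodProb_mono hP1nn hsub
      _ ≤ prodProb P₁ {ω : Fin ((k+1)*n) → 𝒳 | S1 P₁ P₂ n ω ≤ (n:ℝ) * TPAux.muf P₁ P₂ l₁}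
          + prodProb P₁ {ω : Fin ((k+1)*n) → 𝒳 | S1 P₁ P₂ n ω ≤ (n:ℝ) * TPAux.muf P₁ P₂ l₂ ∧
            S2 P₁ P₂ n ω ≤ ((k*n : ℕ):ℝ) * TPAux.muf P₁ P₂ lam} :=
          TPAux.prodProb_union_le hP1nn _ _
      _ ≤ Real.exp (-((n:ℝ) * TPAux.F1 P₁ P₂ l₁))
          + Real.exp (-((n:ℝ) * TPAux.F1 P₁ P₂ l₂ + ((k*n : ℕ):ℝ) * TPAux.F1 P₁ P₂ lam)) := by
          apply add_le_add
          · exact TPAux.bound_P1_one h1pos h1sum n k l₁ (TPAux.muf P₁ P₂ l₁) hl₁01.1 _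
              (fun ω hω => hω)
          · exact TPAux.bound_P1_two h1pos n k l₂ lam (TPAux.muf P₁ P₂ l₂) (TPAux.muf P₁ P₂ lam)
              hl₂01.1 hlam01.1 _ (fun ω hω => ⟨hω.1, hω.2⟩)
      _ ≤ Real.exp (-(E₁ * n)) + Real.exp (-(E₁ * n)) := by
          apply add_le_add <;> apply Real.exp_le_exp.2
          · nlinarith [hnR.le, hE1le]
          · rw [hl₂, hE1eq]
            push_cast
            nlinarith [mul_nonneg (mul_nonneg hkR.le hnR.le) (sub_nonneg.2 hq1le)]
      _ = 2 * Real.exp (-(E₁ * n)) := by ring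
      _ ≤ Real.exp (-((E₁ - δ) * n)) := twoexp E₁
  · -- P₂ error bound
    simp only [kl1, kl2, TPAux.F2_sub_F1]
    have hsub : twoPhaseA1 P₁ P₂ k n (TPAux.muf P₁ P₂ l₂) (TPAux.muf P₁ P₂ l₁)
        (TPAux.muf P₁ P₂ lam) ⊆
        {ω : Fin ((k+1)*n) → 𝒳 | (n:ℝ) * TPAux.muf P₁ P₂ l₂ ≤ S1 P₁ P₂ n ω} ∪
        {ω : Fin ((k+1)*n) → 𝒳 | (n:ℝ) * TPAux.muf P₁ P₂ l₁ ≤ S1 P₁ P₂ n ω ∧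
          ((k*n : ℕ):ℝ) * TPAux.muf P₁ P₂ lam ≤ S2 P₁ P₂ n ω} := by
      intro ω hω
      simp only [twoPhaseA1, Set.mem_setOf_eq] at hω
      rcases hω with h | ⟨hb, ha, hs⟩
      · left
        show (n:ℝ) * TPAux.muf P₁ P₂ l₂ ≤ S1 P₁ P₂ n ω
        rw [le_div_iff₀ hnR] at h
        linarith
      · right
        refine ⟨?_, ?_⟩
        · rw [lt_div_iff₀ hnR] at hb
          linarith
        · rw [le_div_iff₀ hknR] at hs
          push_cast
          linarith
    calc prodProb P₂ (twoPhaseA1 P₁ P₂ k n (TPAux.muf P₁ P₂ l₂) (TPAux.muf P₁ P₂ l₁)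
            (TPAux.muf P₁ P₂ lam))
        ≤ prodProb P₂ ({ω : Fin ((k+1)*n) → 𝒳 | (n:ℝ) * TPAux.muf P₁ P₂ l₂ ≤ S1 P₁ P₂ n ω} ∪
          {ω : Fin ((k+1)*n) → 𝒳 | (n:ℝ) * TPAux.muf P₁ P₂ l₁ ≤ S1 P₁ P₂ n ω ∧
            ((k*n : ℕ):ℝ) * TPAux.muf P₁ P₂ lam ≤ S2 P₁ P₂ n ω}) :=
          TPAux.prodProb_mono hP2nn hsub
      _ ≤ prodProb P₂ {ω : Fin ((k+1)*n) → 𝒳 | (n:ℝ) * TPAux.muf P₁ P₂ l₂ ≤ S1 P₁ P₂ n ω}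
          + prodProb P₂ {ω : Fin ((k+1)*n) → 𝒳 | (n:ℝ) * TPAux.muf P₁ P₂ l₁ ≤ S1 P₁ P₂ n ω ∧
            ((k*n : ℕ):ℝ) * TPAux.muf P₁ P₂ lam ≤ S2 P₁ P₂ n ω} :=
          TPAux.prodProb_union_le hP2nn _ _
      _ ≤ Real.exp (-((n:ℝ) * TPAux.F2 P₁ P₂ l₂))
          + Real.exp (-((n:ℝ) * TPAux.F2 P₁ P₂ l₁ + ((k*n : ℕ):ℝ) * TPAux.F2 P₁ P₂ lam)) := by
          apply add_le_add
          · exact TPAux.bound_P2_one h1pos h2pos h2sum n k l₂ (TPAux.muf P₁ P₂ l₂) hl₂01.2 _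
              (fun ω hω => hω)
          · exact TPAux.bound_P2_two h1pos h2pos n k l₁ lam (TPAux.muf P₁ P₂ l₁)
              (TPAux.muf P₁ P₂ lam) hl₁01.2 hlam01.2 _ (fun ω hω => ⟨hω.1, hω.2⟩)
      _ ≤ Real.exp (-(E₂ * n)) + Real.exp (-(E₂ * n)) := by
          apply add_le_add <;> apply Real.exp_le_exp.2
          · nlinarith [hnR.le, hE2le]
          · rw [hl₁, hE2eq]
            push_cast
            nlinarith [mul_nonneg (mul_nonneg hkR.le hnR.le) (sub_nonneg.2 hq2le)]
      _ = 2 * Real.exp (-(E₂ * n)) := by ring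
      _ ≤ Real.exp (-((E₂ - δ) * n)) := twoexp E₂
end

section
/- Let k* = max{ D(P₂‖P₁)/D*, D(P₁‖P₂)/D* }. For every γ ∈ (0, D*), every integer k ≥ k*, and the two-phase test with phase-II parameter λ = λ* (so α = 0) and λ₁, λ₂ chosen with D(P^(λ₁)‖P₂) = γ and D(P^(λ₂)‖P₁) = γ, one has limsup_{n→∞} (1/n) log P₁(A₂^τ) ≤ −E₁(γ) and limsup_{n→∞} (1/n) log P₂(A₁^τ) ≤ −E₂(γ); hence this test achieves every (E₁,E₂) with E₁ ≤ E₁(γ) and E₂ ≤ E₂(γ). -/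
open Real Filter Finset MeasureTheory
open scoped Classical
set_option linter.unusedSectionVars false

variable {𝒳 : Type*} [Fintype 𝒳] [DecidableEq 𝒳] [Nonempty 𝒳]

/-! ### Auxiliary definitions and lemmas for the proof -/

/-- Per-sample log-likelihood ratio. -/
noncomputable def LLx (P₁ P₂ : 𝒳 → ℝ) (x : 𝒳) : ℝ := Real.log (P₁ x / P₂ x)

/-- Normalizing constant of the tilted family. -/
noncomputable def Zf (P₁ P₂ : 𝒳 → ℝ) (l : ℝ) : ℝ := ∑ a, P₁ a ^ (1 - l) * P₂ a ^ l

/-- Mean of the log-likelihood ratio under the tilted distribution. -/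
noncomputable def Mf (P₁ P₂ : 𝒳 → ℝ) (l : ℝ) : ℝ :=
  (∑ x, P₁ x ^ (1 - l) * P₂ x ^ l * LLx P₁ P₂ x) / Zf P₁ P₂ l

section Aux

variable (P₁ P₂ : 𝒳 → ℝ)

lemma w_eq (h1 : ∀ x, 0 < P₁ x) (h2 : ∀ x, 0 < P₂ x) (l : ℝ) (x : 𝒳) :
    P₁ x ^ (1 - l) * P₂ x ^ l = P₁ x * Real.exp (-(l * LLx P₁ P₂ x)) := by
  rw [Real.rpow_def_of_pos (h1 x), Real.rpow_def_of_pos (h2 x), ← Real.exp_add, LLx,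
    Real.log_div (ne_of_gt (h1 x)) (ne_of_gt (h2 x)),
    show P₁ x * Real.exp (-(l * (Real.log (P₁ x) - Real.log (P₂ x))))
        = Real.exp (Real.log (P₁ x) + -(l * (Real.log (P₁ x) - Real.log (P₂ x)))) from by
      rw [Real.exp_add, Real.exp_log (h1 x)],
    Real.exp_eq_exp]
  ring

lemma w_eq2 (h1 : ∀ x, 0 < P₁ x) (h2 : ∀ x, 0 < P₂ x) (l : ℝ) (x : 𝒳) :
    P₁ x ^ (1 - l) * P₂ x ^ l = P₂ x * Real.exp ((1 - l) * LLx P₁ P₂ x) := by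
  rw [Real.rpow_def_of_pos (h1 x), Real.rpow_def_of_pos (h2 x), ← Real.exp_add, LLx,
    Real.log_div (ne_of_gt (h1 x)) (ne_of_gt (h2 x)),
    show P₂ x * Real.exp ((1 - l) * (Real.log (P₁ x) - Real.log (P₂ x)))
        = Real.exp (Real.log (P₂ x) + (1 - l) * (Real.log (P₁ x) - Real.log (P₂ x))) from by
      rw [Real.exp_add, Real.exp_log (h2 x)],
    Real.exp_eq_exp]
  ring

lemma tilt_def (l : ℝ) (x : 𝒳) :
    tilt P₁ P₂ l x = P₁ x ^ (1 - l) * P₂ x ^ l / Zf P₁ P₂ l := rfl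

lemma Zf_pos (h1 : ∀ x, 0 < P₁ x) (h2 : ∀ x, 0 < P₂ x) (l : ℝ) : 0 < Zf P₁ P₂ l :=
  Finset.sum_pos (fun x _ => mul_pos (Real.rpow_pos_of_pos (h1 x) _)
    (Real.rpow_pos_of_pos (h2 x) _)) univ_nonempty

lemma tilt_pos (h1 : ∀ x, 0 < P₁ x) (h2 : ∀ x, 0 < P₂ x) (l : ℝ) (x : 𝒳) :
    0 < tilt P₁ P₂ l x :=
  div_pos (mul_pos (Real.rpow_pos_of_pos (h1 x) _) (Real.rpow_pos_of_pos (h2 x) _))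
    (Zf_pos P₁ P₂ h1 h2 l)

lemma tilt_sum (h1 : ∀ x, 0 < P₁ x) (h2 : ∀ x, 0 < P₂ x) (l : ℝ) :
    ∑ x, tilt P₁ P₂ l x = 1 := by
  simp only [tilt_def]
  rw [← Finset.sum_div]
  exact div_self (ne_of_gt (Zf_pos P₁ P₂ h1 h2 l))

lemma tilt_mul_sum (h1 : ∀ x, 0 < P₁ x) (h2 : ∀ x, 0 < P₂ x) (l : ℝ) (f : 𝒳 → ℝ) :
    ∑ x, tilt P₁ P₂ l x * f x = (∑ x, P₁ x ^ (1 - l) * P₂ x ^ l * f x) / Zf P₁ P₂ l := by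
  have h : ∀ x : 𝒳, tilt P₁ P₂ l x * f x = P₁ x ^ (1 - l) * P₂ x ^ l * f x / Zf P₁ P₂ l := by
    intro x; rw [tilt_def, div_mul_eq_mul_div]
  simp_rw [h]
  rw [← Finset.sum_div]

lemma tilt_LL_avg (h1 : ∀ x, 0 < P₁ x) (h2 : ∀ x, 0 < P₂ x) (l : ℝ) :
    ∑ x, tilt P₁ P₂ l x * LLx P₁ P₂ x = Mf P₁ P₂ l := by
  rw [tilt_mul_sum P₁ P₂ h1 h2, Mf]

lemma klP1_eq (h1 : ∀ x, 0 < P₁ x) (h2 : ∀ x, 0 < P₂ x) (l : ℝ) :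
    kl (tilt P₁ P₂ l) P₁ = -(l * Mf P₁ P₂ l) - Real.log (Zf P₁ P₂ l) := by
  have hZ := Zf_pos P₁ P₂ h1 h2 l
  have key : ∀ x : 𝒳, Real.log (tilt P₁ P₂ l x / P₁ x)
      = -(l * LLx P₁ P₂ x) - Real.log (Zf P₁ P₂ l) := by
    intro x
    have : tilt P₁ P₂ l x / P₁ x = Real.exp (-(l * LLx P₁ P₂ x)) / Zf P₁ P₂ l := by
      rw [tilt_def, w_eq P₁ P₂ h1 h2, div_div, mul_comm (Zf P₁ P₂ l) (P₁ x),
        mul_div_mul_left _ _ (ne_of_gt (h1 x))]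
    rw [this, Real.log_div (Real.exp_ne_zero _) (ne_of_gt hZ), Real.log_exp]
  rw [kl]
  calc ∑ x, tilt P₁ P₂ l x * Real.log (tilt P₁ P₂ l x / P₁ x)
      = ∑ x, (tilt P₁ P₂ l x * (-(LLx P₁ P₂ x)) * l
          - tilt P₁ P₂ l x * Real.log (Zf P₁ P₂ l)) := by
        refine Finset.sum_congr rfl fun x _ => ?_
        rw [key x]; ring
    _ = (∑ x, tilt P₁ P₂ l x * (-(LLx P₁ P₂ x))) * l
          - (∑ x, tilt P₁ P₂ l x) * Real.log (Zf P₁ P₂ l) := by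
        rw [Finset.sum_sub_distrib, Finset.sum_mul, Finset.sum_mul]
    _ = -(l * Mf P₁ P₂ l) - Real.log (Zf P₁ P₂ l) := by
        have : ∑ x, tilt P₁ P₂ l x * (-(LLx P₁ P₂ x))
            = -∑ x, tilt P₁ P₂ l x * LLx P₁ P₂ x := by
          rw [← Finset.sum_neg_distrib]; exact Finset.sum_congr rfl fun x _ => by ring
        rw [this, tilt_LL_avg P₁ P₂ h1 h2, tilt_sum P₁ P₂ h1 h2, one_mul]; ring

lemma klP2_eq (h1 : ∀ x, 0 < P₁ x) (h2 : ∀ x, 0 < P₂ x) (l : ℝ) :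
    kl (tilt P₁ P₂ l) P₂ = (1 - l) * Mf P₁ P₂ l - Real.log (Zf P₁ P₂ l) := by
  have hZ := Zf_pos P₁ P₂ h1 h2 l
  have key : ∀ x : 𝒳, Real.log (tilt P₁ P₂ l x / P₂ x)
      = (1 - l) * LLx P₁ P₂ x - Real.log (Zf P₁ P₂ l) := by
    intro x
    have : tilt P₁ P₂ l x / P₂ x = Real.exp ((1 - l) * LLx P₁ P₂ x) / Zf P₁ P₂ l := by
      rw [tilt_def, w_eq2 P₁ P₂ h1 h2, div_div, mul_comm (Zf P₁ P₂ l) (P₂ x),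
        mul_div_mul_left _ _ (ne_of_gt (h2 x))]
    rw [this, Real.log_div (Real.exp_ne_zero _) (ne_of_gt hZ), Real.log_exp]
  rw [kl]
  calc ∑ x, tilt P₁ P₂ l x * Real.log (tilt P₁ P₂ l x / P₂ x)
      = ∑ x, (tilt P₁ P₂ l x * LLx P₁ P₂ x * (1 - l)
          - tilt P₁ P₂ l x * Real.log (Zf P₁ P₂ l)) := by
        refine Finset.sum_congr rfl fun x _ => ?_
        rw [key x]; ring
    _ = (∑ x, tilt P₁ P₂ l x * LLx P₁ P₂ x) * (1 - l)
          - (∑ x, tilt P₁ P₂ l x) * Real.log (Zf P₁ P₂ l) := by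
        rw [Finset.sum_sub_distrib, Finset.sum_mul, Finset.sum_mul]
    _ = (1 - l) * Mf P₁ P₂ l - Real.log (Zf P₁ P₂ l) := by
        rw [tilt_LL_avg P₁ P₂ h1 h2, tilt_sum P₁ P₂ h1 h2, one_mul]; ring

lemma beta_eq (h1 : ∀ x, 0 < P₁ x) (h2 : ∀ x, 0 < P₂ x) (l : ℝ) :
    kl (tilt P₁ P₂ l) P₂ - kl (tilt P₁ P₂ l) P₁ = Mf P₁ P₂ l := by
  rw [klP1_eq P₁ P₂ h1 h2, klP2_eq P₁ P₂ h1 h2]; ring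

lemma w_shift (h1 : ∀ x, 0 < P₁ x) (h2 : ∀ x, 0 < P₂ x) (a b : ℝ) (x : 𝒳) :
    P₁ x ^ (1 - b) * P₂ x ^ b
      = P₁ x ^ (1 - a) * P₂ x ^ a * Real.exp (-((b - a) * LLx P₁ P₂ x)) := by
  rw [w_eq P₁ P₂ h1 h2 a, w_eq P₁ P₂ h1 h2 b, mul_assoc, ← Real.exp_add]
  congr 1
  ring

/-- Tangent-line (Jensen) inequality for the log-partition function. -/
lemma tangent (h1 : ∀ x, 0 < P₁ x) (h2 : ∀ x, 0 < P₂ x) (a b : ℝ) :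
    Real.log (Zf P₁ P₂ a) + -((b - a) * Mf P₁ P₂ a) ≤ Real.log (Zf P₁ P₂ b) := by
  have hZa := Zf_pos P₁ P₂ h1 h2 a
  have hZb := Zf_pos P₁ P₂ h1 h2 b
  set m : ℝ := -((b - a) * Mf P₁ P₂ a) with hm
  have key : Zf P₁ P₂ a * Real.exp m ≤ Zf P₁ P₂ b := by
    have hsum : Zf P₁ P₂ b = ∑ x, tilt P₁ P₂ a x * Real.exp (-((b - a) * LLx P₁ P₂ x))
        * Zf P₁ P₂ a := by
      rw [Zf]
      refine Finset.sum_congr rfl fun x _ => ?_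
      rw [tilt_def, div_mul_eq_mul_div, div_mul_cancel₀ _ (ne_of_gt hZa)]
      exact w_shift P₁ P₂ h1 h2 a b x
    have havg : ∑ x, tilt P₁ P₂ a x * (-((b - a) * LLx P₁ P₂ x)) = m := by
      have : ∀ x : 𝒳, tilt P₁ P₂ a x * (-((b - a) * LLx P₁ P₂ x))
          = tilt P₁ P₂ a x * LLx P₁ P₂ x * (-(b - a)) := by intro x; ring
      simp_rw [this]
      rw [← Finset.sum_mul, tilt_LL_avg P₁ P₂ h1 h2, hm]
      ring
    have hpt : ∀ x : 𝒳, tilt P₁ P₂ a x * (Real.exp m * (1 + (-((b - a) * LLx P₁ P₂ x)) - m))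
        ≤ tilt P₁ P₂ a x * Real.exp (-((b - a) * LLx P₁ P₂ x)) := by
      intro x
      refine mul_le_mul_of_nonneg_left ?_ (le_of_lt (tilt_pos P₁ P₂ h1 h2 a x))
      have h3 : (-((b - a) * LLx P₁ P₂ x)) - m + 1 ≤ Real.exp ((-((b - a) * LLx P₁ P₂ x)) - m) :=
        Real.add_one_le_exp _
      calc Real.exp m * (1 + (-((b - a) * LLx P₁ P₂ x)) - m)
          = Real.exp m * ((-((b - a) * LLx P₁ P₂ x)) - m + 1) := by ring
        _ ≤ Real.exp m * Real.exp ((-((b - a) * LLx P₁ P₂ x)) - m) :=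
            mul_le_mul_of_nonneg_left h3 (le_of_lt (Real.exp_pos m))
        _ = Real.exp (-((b - a) * LLx P₁ P₂ x)) := by rw [← Real.exp_add]; ring_nf
    have hsumle : ∑ x, tilt P₁ P₂ a x * (Real.exp m * (1 + (-((b - a) * LLx P₁ P₂ x)) - m))
        ≤ ∑ x, tilt P₁ P₂ a x * Real.exp (-((b - a) * LLx P₁ P₂ x)) :=
      Finset.sum_le_sum fun x _ => hpt x
    have hlhs : ∑ x, tilt P₁ P₂ a x * (Real.exp m * (1 + (-((b - a) * LLx P₁ P₂ x)) - m))
        = Real.exp m := by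
      have : ∀ x : 𝒳, tilt P₁ P₂ a x * (Real.exp m * (1 + (-((b - a) * LLx P₁ P₂ x)) - m))
          = (tilt P₁ P₂ a x * (1 - m) + tilt P₁ P₂ a x * (-((b - a) * LLx P₁ P₂ x)))
            * Real.exp m := by intro x; ring
      simp_rw [this]
      rw [← Finset.sum_mul, Finset.sum_add_distrib, ← Finset.sum_mul,
        tilt_sum P₁ P₂ h1 h2, havg]
      ring
    have : Real.exp m ≤ ∑ x, tilt P₁ P₂ a x * Real.exp (-((b - a) * LLx P₁ P₂ x)) := by
      rw [← hlhs]; exact hsumle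
    calc Zf P₁ P₂ a * Real.exp m
        ≤ Zf P₁ P₂ a * ∑ x, tilt P₁ P₂ a x * Real.exp (-((b - a) * LLx P₁ P₂ x)) :=
          mul_le_mul_of_nonneg_left this (le_of_lt hZa)
      _ = Zf P₁ P₂ b := by rw [hsum, Finset.mul_sum]; exact Finset.sum_congr rfl fun x _ => by ring
  calc Real.log (Zf P₁ P₂ a) + m = Real.log (Zf P₁ P₂ a * Real.exp m) := by
        rw [Real.log_mul (ne_of_gt hZa) (Real.exp_ne_zero m), Real.log_exp]
    _ ≤ Real.log (Zf P₁ P₂ b) := Real.log_le_log (mul_pos hZa (Real.exp_pos m)) key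

/-- The tilted mean of the log-likelihood ratio is nonincreasing. -/
lemma Mf_mono (h1 : ∀ x, 0 < P₁ x) (h2 : ∀ x, 0 < P₂ x) {a b : ℝ} (hab : a ≤ b) :
    Mf P₁ P₂ b ≤ Mf P₁ P₂ a := by
  have hZa := Zf_pos P₁ P₂ h1 h2 a
  have hZb := Zf_pos P₁ P₂ h1 h2 b
  set w : 𝒳 → ℝ := fun x => P₁ x ^ (1 - a) * P₂ x ^ a with hw
  set g : 𝒳 → ℝ := fun x => Real.exp (-((b - a) * LLx P₁ P₂ x)) with hg
  set L : 𝒳 → ℝ := fun x => LLx P₁ P₂ x with hL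
  have hwpos : ∀ x, 0 < w x := fun x =>
    mul_pos (Real.rpow_pos_of_pos (h1 x) _) (Real.rpow_pos_of_pos (h2 x) _)
  have hanti : ∀ x y : 𝒳, (L x - L y) * (g x - g y) ≤ 0 := by
    intro x y
    rcases le_total (L x) (L y) with h | h
    · apply mul_nonpos_of_nonpos_of_nonneg
      · linarith
      · have : -((b - a) * L y) ≤ -((b - a) * L x) := by nlinarith
        simp only [hg, sub_nonneg]
        exact Real.exp_le_exp.2 this
    · apply mul_nonpos_of_nonneg_of_nonpos
      · linarith
      · have : -((b - a) * L x) ≤ -((b - a) * L y) := by nlinarith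
        simp only [hg, sub_nonpos]
        exact Real.exp_le_exp.2 this
  have hdouble : ∑ x, ∑ y, w x * w y * ((L x - L y) * (g x - g y)) ≤ 0 := by
    refine Finset.sum_nonpos fun x _ => Finset.sum_nonpos fun y _ => ?_
    exact mul_nonpos_of_nonneg_of_nonpos
      (le_of_lt (mul_pos (hwpos x) (hwpos y))) (hanti x y)
  have hexpand : ∑ x, ∑ y, w x * w y * ((L x - L y) * (g x - g y))
      = 2 * ((∑ x, w x * L x * g x) * (∑ x, w x) - (∑ x, w x * L x) * (∑ x, w x * g x)) := by
    have hpt : ∀ x y : 𝒳, w x * w y * ((L x - L y) * (g x - g y))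
        = w x * L x * g x * w y - w x * L x * (w y * g y)
          - w x * g x * (w y * L y) + w x * (w y * L y * g y) := by
      intro x y; ring
    simp_rw [hpt, Finset.sum_add_distrib, Finset.sum_sub_distrib,
      ← Finset.mul_sum, ← Finset.sum_mul]
    ring
  have hkey : (∑ x, w x * L x * g x) * (∑ x, w x) ≤ (∑ x, w x * L x) * (∑ x, w x * g x) := by
    nlinarith [hdouble, hexpand]
  have hZa' : Zf P₁ P₂ a = ∑ x, w x := rfl
  have hZb' : Zf P₁ P₂ b = ∑ x, w x * g x := by
    rw [Zf]
    exact Finset.sum_congr rfl fun x _ => w_shift P₁ P₂ h1 h2 a b x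
  have hMb : Mf P₁ P₂ b = (∑ x, w x * L x * g x) / Zf P₁ P₂ b := by
    rw [Mf]
    congr 1
    refine Finset.sum_congr rfl fun x _ => ?_
    rw [w_shift P₁ P₂ h1 h2 a b]
    simp only [hw, hg, hL]
    ring
  have hMa : Mf P₁ P₂ a = (∑ x, w x * L x) / Zf P₁ P₂ a := rfl
  rw [hMb, hMa, div_le_div_iff₀ hZb hZa, hZa', hZb']
  exact hkey

/-- Gibbs' inequality: KL divergence between positive pmfs is nonnegative. -/
lemma kl_nonneg (Q P : 𝒳 → ℝ) (hQ : ∀ x, 0 < Q x) (hP : ∀ x, 0 < P x)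
    (hQs : ∑ x, Q x = 1) (hPs : ∑ x, P x = 1) : 0 ≤ kl Q P := by
  have key : ∀ x : 𝒳, Q x * Real.log (Q x / P x) ≥ Q x - P x := by
    intro x
    have hlog : Real.log (P x / Q x) ≤ P x / Q x - 1 :=
      Real.log_le_sub_one_of_pos (div_pos (hP x) (hQ x))
    have hswap : Real.log (Q x / P x) = -Real.log (P x / Q x) := by
      rw [← Real.log_inv]
      congr 1
      rw [inv_div]
    rw [hswap]
    have := mul_le_mul_of_nonneg_left hlog (le_of_lt (hQ x))
    have hdiv : Q x * (P x / Q x - 1) = P x - Q x := by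
      rw [mul_sub, mul_one, mul_div_cancel₀ _ (ne_of_gt (hQ x))]
    nlinarith
  calc (0:ℝ) = ∑ x, (Q x - P x) := by rw [Finset.sum_sub_distrib, hQs, hPs]; ring
    _ ≤ ∑ x, Q x * Real.log (Q x / P x) := Finset.sum_le_sum fun x _ => key x
    _ = kl Q P := rfl

lemma tilt_zero (h1 : ∀ x, 0 < P₁ x) (h2 : ∀ x, 0 < P₂ x) (h1s : ∑ x, P₁ x = 1) :
    tilt P₁ P₂ 0 = P₁ := by
  funext x
  rw [tilt_def]
  have : Zf P₁ P₂ 0 = 1 := by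
    rw [Zf]
    have h : ∀ a : 𝒳, P₁ a ^ (1 - (0:ℝ)) * P₂ a ^ (0:ℝ) = P₁ a := by
      intro a; rw [sub_zero, Real.rpow_one, Real.rpow_zero, mul_one]
    rw [Finset.sum_congr rfl fun a _ => h a, h1s]
  rw [this, sub_zero, Real.rpow_one, Real.rpow_zero, mul_one, div_one]

lemma tilt_one (h1 : ∀ x, 0 < P₁ x) (h2 : ∀ x, 0 < P₂ x) (h2s : ∑ x, P₂ x = 1) :
    tilt P₁ P₂ 1 = P₂ := by
  funext x
  rw [tilt_def]
  have : Zf P₁ P₂ 1 = 1 := by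
    rw [Zf]
    have h : ∀ a : 𝒳, P₁ a ^ (1 - (1:ℝ)) * P₂ a ^ (1:ℝ) = P₂ a := by
      intro a; rw [sub_self, Real.rpow_one, Real.rpow_zero, one_mul]
    rw [Finset.sum_congr rfl fun a _ => h a, h2s]
  rw [this, sub_self, Real.rpow_one, Real.rpow_zero, one_mul, div_one]

lemma kl_self (P : 𝒳 → ℝ) : kl P P = 0 := by
  rw [kl]
  refine Finset.sum_eq_zero fun x _ => ?_
  rcases eq_or_ne (P x) 0 with h | h
  · rw [h, zero_mul]
  · rw [div_self h, Real.log_one, mul_zero]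

end Aux

section Prob

lemma card_filter_lt_fin {N n : ℕ} (hn : n ≤ N) :
    (Finset.univ.filter (fun i : Fin N => (i : ℕ) < n)).card = n := by
  have h : (Finset.univ.filter (fun i : Fin N => (i : ℕ) < n)).card
      = (Finset.univ : Finset (Fin n)).card := by
    refine Finset.card_bij' (fun i hi => (⟨(i : ℕ), (Finset.mem_filter.1 hi).2⟩ : Fin n))
      (fun j _ => (⟨(j : ℕ), lt_of_lt_of_le j.2 hn⟩ : Fin N)) ?_ ?_ ?_ ?_
    · intro a ha; exact Finset.mem_univ _
    · intro a ha; exact Finset.mem_filter.2 ⟨Finset.mem_univ _, a.2⟩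
    · intro a ha; rfl
    · intro a ha; rfl
  rw [h, Finset.card_univ, Fintype.card_fin]

lemma card_filter_ge_fin {N n : ℕ} (hn : n ≤ N) :
    (Finset.univ.filter (fun i : Fin N => n ≤ (i : ℕ))).card = N - n := by
  have h := Finset.card_filter_add_card_filter_not
    (s := (Finset.univ : Finset (Fin N))) (fun i : Fin N => (i : ℕ) < n)
  have hcongr : Finset.univ.filter (fun i : Fin N => ¬ (i : ℕ) < n)
      = Finset.univ.filter (fun i : Fin N => n ≤ (i : ℕ)) := by
    refine Finset.filter_congr fun i _ => ?_
    simp [not_lt]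
  rw [hcongr, card_filter_lt_fin hn, Finset.card_univ, Fintype.card_fin] at h
  omega

lemma sum_prod_pi {N : ℕ} (f : Fin N → 𝒳 → ℝ) :
    ∑ ω : Fin N → 𝒳, ∏ i, f i (ω i) = ∏ i, ∑ x, f i x := by
  rw [Finset.prod_univ_sum]
  rw [Fintype.piFinset_univ]

lemma prodProb_mono (P : 𝒳 → ℝ) (hP : ∀ x, 0 ≤ P x) {N : ℕ} {S T : Set (Fin N → 𝒳)}
    (hST : S ⊆ T) : prodProb P S ≤ prodProb P T := by
  refine Finset.sum_le_sum fun ω _ => ?_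
  exact Set.indicator_le_indicator_of_subset hST
    (fun ω' => Finset.prod_nonneg fun i _ => hP (ω' i)) ω

lemma prodProb_nonneg (P : 𝒳 → ℝ) (hP : ∀ x, 0 ≤ P x) {N : ℕ} (S : Set (Fin N → 𝒳)) :
    0 ≤ prodProb P S := by
  refine Finset.sum_nonneg fun ω _ => ?_
  exact Set.indicator_nonneg (fun ω' _ => Finset.prod_nonneg fun i _ => hP (ω' i)) ω

lemma prodProb_union_le (P : 𝒳 → ℝ) (hP : ∀ x, 0 ≤ P x) {N : ℕ} (S T : Set (Fin N → 𝒳)) :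
    prodProb P (S ∪ T) ≤ prodProb P S + prodProb P T := by
  rw [prodProb, prodProb, prodProb, ← Finset.sum_add_distrib]
  refine Finset.sum_le_sum fun ω _ => ?_
  by_cases hS : ω ∈ S
  · by_cases hT : ω ∈ T
    · rw [Set.indicator_of_mem (Set.mem_union_left _ hS), Set.indicator_of_mem hS,
        Set.indicator_of_mem hT]
      have : 0 ≤ ∏ i, P (ω i) := Finset.prod_nonneg fun i _ => hP (ω i)
      linarith
    · rw [Set.indicator_of_mem (Set.mem_union_left _ hS), Set.indicator_of_mem hS,
        Set.indicator_of_notMem hT, add_zero]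
  · by_cases hT : ω ∈ T
    · rw [Set.indicator_of_mem (Set.mem_union_right _ hT), Set.indicator_of_notMem hS,
        Set.indicator_of_mem hT, zero_add]
    · rw [Set.indicator_of_notMem (fun h => h.elim hS hT), Set.indicator_of_notMem hS,
        Set.indicator_of_notMem hT, add_zero]

lemma prodProb_ge_single (P : 𝒳 → ℝ) (hP : ∀ x, 0 ≤ P x) {N : ℕ} {S : Set (Fin N → 𝒳)}
    {ω₀ : Fin N → 𝒳} (hω : ω₀ ∈ S) : ∏ i, P (ω₀ i) ≤ prodProb P S := by
  rw [prodProb]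
  have h0 : S.indicator (fun ω' => ∏ i, P (ω' i)) ω₀ = ∏ i, P (ω₀ i) :=
    Set.indicator_of_mem hω _
  rw [← h0]
  refine Finset.single_le_sum (fun ω _ => ?_) (Finset.mem_univ ω₀)
  exact Set.indicator_nonneg (fun ω' _ => Finset.prod_nonneg fun i _ => hP (ω' i)) ω

/-- Generic Chernoff bound over a window of coordinates. -/
lemma chernoff_core (P : 𝒳 → ℝ) (hP : ∀ x, 0 < P x) (hPsum : ∑ x, P x = 1)
    {N : ℕ} (p : Fin N → Prop) [DecidablePred p] (φ : 𝒳 → ℝ) (c θ : ℝ) (hθ : 0 ≤ θ)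
    (S : Set (Fin N → 𝒳))
    (hS : ∀ ω ∈ S, ∑ i ∈ Finset.univ.filter p, φ (ω i) ≤ c) :
    prodProb P S ≤ Real.exp (θ * c)
      * (∑ x, P x * Real.exp (-(θ * φ x))) ^ (Finset.univ.filter p).card := by
  set Zθ : ℝ := ∑ x, P x * Real.exp (-(θ * φ x)) with hZθ
  have step1 : prodProb P S
      ≤ ∑ ω : Fin N → 𝒳, Real.exp (θ * (c - ∑ i ∈ Finset.univ.filter p, φ (ω i)))
          * ∏ i, P (ω i) := by
    rw [prodProb]
    refine Finset.sum_le_sum fun ω _ => ?_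
    have hprod : 0 ≤ ∏ i, P (ω i) := Finset.prod_nonneg fun i _ => le_of_lt (hP (ω i))
    by_cases hω : ω ∈ S
    · rw [Set.indicator_of_mem hω]
      have h1 : (1:ℝ) ≤ Real.exp (θ * (c - ∑ i ∈ Finset.univ.filter p, φ (ω i))) := by
        rw [← Real.exp_zero]
        exact Real.exp_le_exp.2 (mul_nonneg hθ (sub_nonneg.2 (hS ω hω)))
      nlinarith
    · rw [Set.indicator_of_notMem hω]
      exact mul_nonneg (le_of_lt (Real.exp_pos _)) hprod
  have step2 : ∀ ω : Fin N → 𝒳,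
      Real.exp (θ * (c - ∑ i ∈ Finset.univ.filter p, φ (ω i))) * ∏ i, P (ω i)
      = Real.exp (θ * c) * ∏ i, (if p i then P (ω i) * Real.exp (-(θ * φ (ω i))) else P (ω i)) := by
    intro ω
    have hexp : Real.exp (θ * (c - ∑ i ∈ Finset.univ.filter p, φ (ω i)))
        = Real.exp (θ * c) * ∏ i ∈ Finset.univ.filter p, Real.exp (-(θ * φ (ω i))) := by
      rw [← Real.exp_sum, ← Real.exp_add]
      congr 1
      rw [Finset.sum_neg_distrib, ← Finset.mul_sum]
      ring
    rw [hexp]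
    have hsplit : ∏ i ∈ Finset.univ.filter p, Real.exp (-(θ * φ (ω i)))
        = ∏ i, (if p i then Real.exp (-(θ * φ (ω i))) else 1) := Finset.prod_filter _ _
    rw [hsplit, mul_assoc, ← Finset.prod_mul_distrib]
    congr 1
    refine Finset.prod_congr rfl fun i _ => ?_
    by_cases hpi : p i
    · rw [if_pos hpi, if_pos hpi]; ring
    · rw [if_neg hpi, if_neg hpi, one_mul]
  have step3 : ∑ ω : Fin N → 𝒳,
      Real.exp (θ * c) * ∏ i, (if p i then P (ω i) * Real.exp (-(θ * φ (ω i))) else P (ω i))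
      = Real.exp (θ * c) * Zθ ^ (Finset.univ.filter p).card := by
    rw [← Finset.mul_sum]
    congr 1
    have := sum_prod_pi (𝒳 := 𝒳)
      (fun (i : Fin N) (x : 𝒳) => if p i then P x * Real.exp (-(θ * φ x)) else P x)
    rw [show (∑ ω : Fin N → 𝒳,
        ∏ i, (if p i then P (ω i) * Real.exp (-(θ * φ (ω i))) else P (ω i)))
        = ∑ ω : Fin N → 𝒳,
          ∏ i, (fun (i : Fin N) (x : 𝒳) => if p i then P x * Real.exp (-(θ * φ x)) else P x) i (ω i)
        from rfl, this]
    have hfac : ∀ i : Fin N, (∑ x, (if p i then P x * Real.exp (-(θ * φ x)) else P x))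
        = if p i then Zθ else 1 := by
      intro i
      by_cases hpi : p i
      · simp only [if_pos hpi, hZθ]
      · simp only [if_neg hpi, hPsum]
    rw [Finset.prod_congr rfl fun i _ => hfac i, ← Finset.prod_filter, Finset.prod_const]
  calc prodProb P S ≤ _ := step1
    _ = Real.exp (θ * c) * Zθ ^ (Finset.univ.filter p).card := by
        rw [Finset.sum_congr rfl fun ω _ => step2 ω, step3]

end Prob

section Bounds

variable (P₁ P₂ : 𝒳 → ℝ)

lemma sum_exp_tilt1 (h1 : ∀ x, 0 < P₁ x) (h2 : ∀ x, 0 < P₂ x) (l : ℝ) :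
    ∑ x, P₁ x * Real.exp (-(l * LLx P₁ P₂ x)) = Zf P₁ P₂ l := by
  rw [Zf]
  exact Finset.sum_congr rfl fun x _ => (w_eq P₁ P₂ h1 h2 l x).symm

lemma sum_exp_tilt2 (h1 : ∀ x, 0 < P₁ x) (h2 : ∀ x, 0 < P₂ x) (l : ℝ) :
    ∑ x, P₂ x * Real.exp (-((1 - l) * (-(LLx P₁ P₂ x)))) = Zf P₁ P₂ l := by
  rw [Zf]
  refine Finset.sum_congr rfl fun x _ => ?_
  rw [w_eq2 P₁ P₂ h1 h2 l x]
  congr 2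
  ring

lemma bound_A2 (h1 : ∀ x, 0 < P₁ x) (h2 : ∀ x, 0 < P₂ x) (h1s : ∑ x, P₁ x = 1)
    (l₁ ls : ℝ) (hl₁ : l₁ ∈ Set.Icc (0:ℝ) 1) (hls : ls ∈ Set.Icc (0:ℝ) 1)
    (hMls : Mf P₁ P₂ ls = 0) (k n : ℕ) (hk : 0 < k) (hn : 0 < n) (a₁ : ℝ) :
    prodProb P₁ (twoPhaseA2 P₁ P₂ k n a₁ (Mf P₁ P₂ l₁) 0)
      ≤ Real.exp (-((n:ℝ) * kl (tilt P₁ P₂ l₁) P₁))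
        + Real.exp (-((k:ℝ) * (n:ℝ) * kl (tilt P₁ P₂ ls) P₁)) := by
  have hnN : n ≤ (k + 1) * n := Nat.le_mul_of_pos_left n (Nat.succ_pos k)
  have hnR : (0:ℝ) < (n:ℝ) := by exact_mod_cast hn
  have hknR : (0:ℝ) < (k:ℝ) * (n:ℝ) := by positivity
  set S : Set (Fin ((k+1)*n) → 𝒳) := {ω | S1 P₁ P₂ n ω ≤ (n:ℝ) * Mf P₁ P₂ l₁} with hs
  set T : Set (Fin ((k+1)*n) → 𝒳) := {ω | S2 P₁ P₂ n ω ≤ 0} with ht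
  have hincl : twoPhaseA2 P₁ P₂ k n a₁ (Mf P₁ P₂ l₁) 0 ⊆ S ∪ T := by
    intro ω hω
    simp only [twoPhaseA2, Set.mem_setOf_eq] at hω
    rcases hω with h | ⟨_, _, h⟩
    · left
      show S1 P₁ P₂ n ω ≤ (n:ℝ) * Mf P₁ P₂ l₁
      have hq := (div_le_iff₀ hnR).1 h
      linarith
    · right
      show S2 P₁ P₂ n ω ≤ 0
      have hq := (div_lt_iff₀ hknR).1 h
      rw [zero_mul] at hq
      exact le_of_lt hq
  have hSb : prodProb P₁ S ≤ Real.exp (-((n:ℝ) * kl (tilt P₁ P₂ l₁) P₁)) := by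
    have hc := chernoff_core P₁ h1 h1s (fun i : Fin ((k+1)*n) => (i : ℕ) < n)
      (LLx P₁ P₂) ((n:ℝ) * Mf P₁ P₂ l₁) l₁ hl₁.1 S (fun ω hω => hω)
    rw [card_filter_lt_fin hnN, sum_exp_tilt1 P₁ P₂ h1 h2,
      ← Real.exp_log (Zf_pos P₁ P₂ h1 h2 l₁), ← Real.exp_nat_mul, ← Real.exp_add] at hc
    refine hc.trans (le_of_eq ?_)
    congr 1
    rw [klP1_eq P₁ P₂ h1 h2]
    ring
  have hTb : prodProb P₁ T ≤ Real.exp (-((k:ℝ) * (n:ℝ) * kl (tilt P₁ P₂ ls) P₁)) := by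
    have hc := chernoff_core P₁ h1 h1s (fun i : Fin ((k+1)*n) => n ≤ (i : ℕ))
      (LLx P₁ P₂) 0 ls hls.1 T (fun ω hω => by exact hω)
    have hcard : (Finset.univ.filter (fun i : Fin ((k+1)*n) => n ≤ (i : ℕ))).card = k * n := by
      rw [card_filter_ge_fin hnN, add_mul, one_mul, Nat.add_sub_cancel]
    rw [hcard, sum_exp_tilt1 P₁ P₂ h1 h2,
      ← Real.exp_log (Zf_pos P₁ P₂ h1 h2 ls), ← Real.exp_nat_mul, ← Real.exp_add] at hc
    refine hc.trans (le_of_eq ?_)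
    congr 1
    rw [klP1_eq P₁ P₂ h1 h2, hMls]
    push_cast
    ring
  calc prodProb P₁ (twoPhaseA2 P₁ P₂ k n a₁ (Mf P₁ P₂ l₁) 0)
      ≤ prodProb P₁ (S ∪ T) := prodProb_mono P₁ (fun x => le_of_lt (h1 x)) hincl
    _ ≤ prodProb P₁ S + prodProb P₁ T := prodProb_union_le P₁ (fun x => le_of_lt (h1 x)) S T
    _ ≤ _ := add_le_add hSb hTb

lemma bound_A1 (h1 : ∀ x, 0 < P₁ x) (h2 : ∀ x, 0 < P₂ x) (h2s : ∑ x, P₂ x = 1)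
    (l₂ ls : ℝ) (hl₂ : l₂ ∈ Set.Icc (0:ℝ) 1) (hls : ls ∈ Set.Icc (0:ℝ) 1)
    (hMls : Mf P₁ P₂ ls = 0) (k n : ℕ) (hk : 0 < k) (hn : 0 < n) (b₁ : ℝ) :
    prodProb P₂ (twoPhaseA1 P₁ P₂ k n (Mf P₁ P₂ l₂) b₁ 0)
      ≤ Real.exp (-((n:ℝ) * kl (tilt P₁ P₂ l₂) P₂))
        + Real.exp (-((k:ℝ) * (n:ℝ) * kl (tilt P₁ P₂ ls) P₂)) := by
  have hnN : n ≤ (k + 1) * n := Nat.le_mul_of_pos_left n (Nat.succ_pos k)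
  have hnR : (0:ℝ) < (n:ℝ) := by exact_mod_cast hn
  have hknR : (0:ℝ) < (k:ℝ) * (n:ℝ) := by positivity
  set S : Set (Fin ((k+1)*n) → 𝒳) := {ω | (n:ℝ) * Mf P₁ P₂ l₂ ≤ S1 P₁ P₂ n ω} with hs
  set T : Set (Fin ((k+1)*n) → 𝒳) := {ω | 0 ≤ S2 P₁ P₂ n ω} with ht
  have hincl : twoPhaseA1 P₁ P₂ k n (Mf P₁ P₂ l₂) b₁ 0 ⊆ S ∪ T := by
    intro ω hω
    simp only [twoPhaseA1, Set.mem_setOf_eq] at hω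
    rcases hω with h | ⟨_, _, h⟩
    · left
      show (n:ℝ) * Mf P₁ P₂ l₂ ≤ S1 P₁ P₂ n ω
      have hq := (le_div_iff₀ hnR).1 h
      linarith
    · right
      show (0:ℝ) ≤ S2 P₁ P₂ n ω
      have hq := (le_div_iff₀ hknR).1 h
      rw [zero_mul] at hq
      exact hq
  have hS1neg : ∀ ω : Fin ((k+1)*n) → 𝒳,
      ∑ i ∈ Finset.univ.filter (fun i : Fin ((k+1)*n) => (i : ℕ) < n), -(LLx P₁ P₂ (ω i))
      = -(S1 P₁ P₂ n ω) := by
    intro ω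
    rw [Finset.sum_neg_distrib]
    rfl
  have hS2neg : ∀ ω : Fin ((k+1)*n) → 𝒳,
      ∑ i ∈ Finset.univ.filter (fun i : Fin ((k+1)*n) => n ≤ (i : ℕ)), -(LLx P₁ P₂ (ω i))
      = -(S2 P₁ P₂ n ω) := by
    intro ω
    rw [Finset.sum_neg_distrib]
    rfl
  have hSb : prodProb P₂ S ≤ Real.exp (-((n:ℝ) * kl (tilt P₁ P₂ l₂) P₂)) := by
    have hc := chernoff_core P₂ h2 h2s (fun i : Fin ((k+1)*n) => (i : ℕ) < n)
      (fun x => -(LLx P₁ P₂ x)) (-((n:ℝ) * Mf P₁ P₂ l₂)) (1 - l₂) (by linarith [hl₂.2]) S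
      (fun ω hω => by rw [hS1neg ω]; exact neg_le_neg hω)
    rw [card_filter_lt_fin hnN, sum_exp_tilt2 P₁ P₂ h1 h2,
      ← Real.exp_log (Zf_pos P₁ P₂ h1 h2 l₂), ← Real.exp_nat_mul, ← Real.exp_add] at hc
    refine hc.trans (le_of_eq ?_)
    congr 1
    rw [klP2_eq P₁ P₂ h1 h2]
    ring
  have hTb : prodProb P₂ T ≤ Real.exp (-((k:ℝ) * (n:ℝ) * kl (tilt P₁ P₂ ls) P₂)) := by
    have hc := chernoff_core P₂ h2 h2s (fun i : Fin ((k+1)*n) => n ≤ (i : ℕ))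
      (fun x => -(LLx P₁ P₂ x)) 0 (1 - ls) (by linarith [hls.2]) T
      (fun ω hω => by rw [hS2neg ω]; exact neg_nonpos.2 hω)
    have hcard : (Finset.univ.filter (fun i : Fin ((k+1)*n) => n ≤ (i : ℕ))).card = k * n := by
      rw [card_filter_ge_fin hnN, add_mul, one_mul, Nat.add_sub_cancel]
    rw [hcard, sum_exp_tilt2 P₁ P₂ h1 h2,
      ← Real.exp_log (Zf_pos P₁ P₂ h1 h2 ls), ← Real.exp_nat_mul, ← Real.exp_add] at hc
    refine hc.trans (le_of_eq ?_)
    congr 1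
    rw [klP2_eq P₁ P₂ h1 h2, hMls]
    push_cast
    ring
  calc prodProb P₂ (twoPhaseA1 P₁ P₂ k n (Mf P₁ P₂ l₂) b₁ 0)
      ≤ prodProb P₂ (S ∪ T) := prodProb_mono P₂ (fun x => le_of_lt (h2 x)) hincl
    _ ≤ prodProb P₂ S + prodProb P₂ T := prodProb_union_le P₂ (fun x => le_of_lt (h2 x)) S T
    _ ≤ _ := add_le_add hSb hTb

lemma E1elt_le (h1 : ∀ x, 0 < P₁ x) (h2 : ∀ x, 0 < P₂ x) (h2s : ∑ x, P₂ x = 1)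
    {γ l₁ : ℝ} (hγ0 : 0 < γ) (hl₁ : l₁ ∈ Set.Icc (0:ℝ) 1)
    (hg1 : kl (tilt P₁ P₂ l₁) P₂ = γ)
    {l : ℝ} (hl : l ∈ Set.Icc (0:ℝ) 1) (hγle : γ ≤ kl (tilt P₁ P₂ l) P₂) :
    kl (tilt P₁ P₂ l) P₁ ≤ kl (tilt P₁ P₂ l₁) P₁ ∧ kl (tilt P₁ P₂ l) P₁ ≤ kl P₂ P₁ := by
  have hk1 := klP1_eq P₁ P₂ h1 h2 l
  have hk1' := klP1_eq P₁ P₂ h1 h2 l₁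
  have hk2 := klP2_eq P₁ P₂ h1 h2 l
  have hk2' := klP2_eq P₁ P₂ h1 h2 l₁
  have htan := tangent P₁ P₂ h1 h2 l₁ l
  have hlt1 : l < 1 := by
    rcases lt_or_eq_of_le hl.2 with h | h
    · exact h
    · exfalso
      rw [h, tilt_one P₁ P₂ h1 h2 h2s, kl_self] at hγle
      linarith
  have hμ : Mf P₁ P₂ l₁ ≤ Mf P₁ P₂ l := by
    by_contra hcon
    push_neg at hcon
    have h0 : 0 ≤ kl (tilt P₁ P₂ l) P₂ - kl (tilt P₁ P₂ l₁) P₂ := by rw [hg1]; linarith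
    rw [hk2, hk2'] at h0
    nlinarith [htan, hcon, hlt1]
  constructor
  · have hmul : 0 ≤ l * (Mf P₁ P₂ l - Mf P₁ P₂ l₁) := mul_nonneg hl.1 (by linarith)
    rw [hk1, hk1']
    nlinarith [htan, hmul]
  · have hμ1 : Mf P₁ P₂ 1 ≤ Mf P₁ P₂ l := Mf_mono P₁ P₂ h1 h2 hl.2
    have hmul : 0 ≤ l * (Mf P₁ P₂ l - Mf P₁ P₂ 1) := mul_nonneg hl.1 (by linarith)
    have htan1 := tangent P₁ P₂ h1 h2 1 l
    have hk11 := klP1_eq P₁ P₂ h1 h2 1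
    rw [tilt_one P₁ P₂ h1 h2 h2s] at hk11
    rw [hk1, hk11]
    nlinarith [htan1, hmul]

lemma E2elt_le (h1 : ∀ x, 0 < P₁ x) (h2 : ∀ x, 0 < P₂ x) (h1s : ∑ x, P₁ x = 1)
    {γ l₂ : ℝ} (hγ0 : 0 < γ) (hl₂ : l₂ ∈ Set.Icc (0:ℝ) 1)
    (hg2 : kl (tilt P₁ P₂ l₂) P₁ = γ)
    {l : ℝ} (hl : l ∈ Set.Icc (0:ℝ) 1) (hγle : γ ≤ kl (tilt P₁ P₂ l) P₁) :
    kl (tilt P₁ P₂ l) P₂ ≤ kl (tilt P₁ P₂ l₂) P₂ ∧ kl (tilt P₁ P₂ l) P₂ ≤ kl P₁ P₂ := by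
  have hk1 := klP1_eq P₁ P₂ h1 h2 l
  have hk1' := klP1_eq P₁ P₂ h1 h2 l₂
  have hk2 := klP2_eq P₁ P₂ h1 h2 l
  have hk2' := klP2_eq P₁ P₂ h1 h2 l₂
  have htan := tangent P₁ P₂ h1 h2 l₂ l
  have hgt0 : 0 < l := by
    rcases lt_or_eq_of_le hl.1 with h | h
    · exact h
    · exfalso
      rw [← h, tilt_zero P₁ P₂ h1 h2 h1s, kl_self] at hγle
      linarith
  have hμ : Mf P₁ P₂ l ≤ Mf P₁ P₂ l₂ := by
    by_contra hcon
    push_neg at hcon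
    have h0 : 0 ≤ kl (tilt P₁ P₂ l) P₁ - kl (tilt P₁ P₂ l₂) P₁ := by rw [hg2]; linarith
    rw [hk1, hk1'] at h0
    nlinarith [htan, hcon, hgt0]
  constructor
  · have hmul : 0 ≤ (1 - l) * (Mf P₁ P₂ l₂ - Mf P₁ P₂ l) :=
      mul_nonneg (by linarith [hl.2]) (by linarith)
    rw [hk2, hk2']
    nlinarith [htan, hmul]
  · have hμ0 : Mf P₁ P₂ l ≤ Mf P₁ P₂ 0 := Mf_mono P₁ P₂ h1 h2 hl.1
    have hmul : 0 ≤ (1 - l) * (Mf P₁ P₂ 0 - Mf P₁ P₂ l) :=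
      mul_nonneg (by linarith [hl.2]) (by linarith)
    have htan0 := tangent P₁ P₂ h1 h2 0 l
    have hk20 := klP2_eq P₁ P₂ h1 h2 0
    rw [tilt_zero P₁ P₂ h1 h2 h1s] at hk20
    rw [hk2, hk20]
    nlinarith [htan0, hmul]

lemma min_le_Mf (h1 : ∀ x, 0 < P₁ x) (h2 : ∀ x, 0 < P₂ x) {x₀ : 𝒳}
    (hx : ∀ x, LLx P₁ P₂ x₀ ≤ LLx P₁ P₂ x) (l : ℝ) : LLx P₁ P₂ x₀ ≤ Mf P₁ P₂ l := by
  rw [← tilt_LL_avg P₁ P₂ h1 h2 l]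
  calc LLx P₁ P₂ x₀ = ∑ x, tilt P₁ P₂ l x * LLx P₁ P₂ x₀ := by
        rw [← Finset.sum_mul, tilt_sum P₁ P₂ h1 h2, one_mul]
    _ ≤ ∑ x, tilt P₁ P₂ l x * LLx P₁ P₂ x := Finset.sum_le_sum fun x _ =>
        mul_le_mul_of_nonneg_left (hx x) (le_of_lt (tilt_pos P₁ P₂ h1 h2 l x))

lemma Mf_le_max (h1 : ∀ x, 0 < P₁ x) (h2 : ∀ x, 0 < P₂ x) {x₁ : 𝒳}
    (hx : ∀ x, LLx P₁ P₂ x ≤ LLx P₁ P₂ x₁) (l : ℝ) : Mf P₁ P₂ l ≤ LLx P₁ P₂ x₁ := by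
  rw [← tilt_LL_avg P₁ P₂ h1 h2 l]
  calc ∑ x, tilt P₁ P₂ l x * LLx P₁ P₂ x
      ≤ ∑ x, tilt P₁ P₂ l x * LLx P₁ P₂ x₁ := Finset.sum_le_sum fun x _ =>
        mul_le_mul_of_nonneg_left (hx x) (le_of_lt (tilt_pos P₁ P₂ h1 h2 l x))
    _ = LLx P₁ P₂ x₁ := by rw [← Finset.sum_mul, tilt_sum P₁ P₂ h1 h2, one_mul]

lemma S1_const {N : ℕ} (n : ℕ) (hn : n ≤ N) (x₀ : 𝒳) :
    S1 P₁ P₂ n (fun _ : Fin N => x₀) = (n : ℝ) * LLx P₁ P₂ x₀ := by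
  rw [S1, Finset.sum_const, card_filter_lt_fin hn, nsmul_eq_mul]
  rfl

end Bounds

/-- Abstract limsup step. -/
lemma limsup_log_le {f : ℕ → ℝ} {B c : ℝ}
    (hub : ∀ n : ℕ, 1 ≤ n → f n ≤ 2 * Real.exp (-((n:ℝ) * B)))
    (hlb : ∀ n : ℕ, 1 ≤ n → Real.exp ((n:ℝ) * c) ≤ f n) :
    Filter.limsup (fun n : ℕ => Real.log (f n) / (n:ℝ)) Filter.atTop ≤ -B := by
  have hflog : ∀ n : ℕ, 1 ≤ n → Real.log (f n) / (n:ℝ) ≤ Real.log 2 / (n:ℝ) - B := by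
    intro n hn
    have hnR : (0:ℝ) < (n:ℝ) := by exact_mod_cast hn
    have hpos : 0 < f n := lt_of_lt_of_le (Real.exp_pos _) (hlb n hn)
    have hlog : Real.log (f n) ≤ Real.log 2 + -((n:ℝ) * B) := by
      calc Real.log (f n) ≤ Real.log (2 * Real.exp (-((n:ℝ) * B))) :=
            Real.log_le_log hpos (hub n hn)
        _ = Real.log 2 + -((n:ℝ) * B) := by
            rw [Real.log_mul two_ne_zero (Real.exp_ne_zero _), Real.log_exp]
    calc Real.log (f n) / (n:ℝ) ≤ (Real.log 2 + -((n:ℝ) * B)) / (n:ℝ) := by gcongr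
      _ = Real.log 2 / (n:ℝ) - B := by
          field_simp
          ring
  have hflb : ∀ n : ℕ, 1 ≤ n → c ≤ Real.log (f n) / (n:ℝ) := by
    intro n hn
    have hnR : (0:ℝ) < (n:ℝ) := by exact_mod_cast hn
    have hpos : 0 < f n := lt_of_lt_of_le (Real.exp_pos _) (hlb n hn)
    have hlog : (n:ℝ) * c ≤ Real.log (f n) := by
      calc (n:ℝ) * c = Real.log (Real.exp ((n:ℝ) * c)) := (Real.log_exp _).symm
        _ ≤ Real.log (f n) := Real.log_le_log (Real.exp_pos _) (hlb n hn)
    rw [le_div_iff₀ hnR, mul_comm]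
    exact hlog
  have hg : Filter.Tendsto (fun n : ℕ => Real.log 2 / (n:ℝ) - B) Filter.atTop
      (nhds (0 - B)) :=
    (tendsto_const_div_atTop_nhds_zero_nat _).sub tendsto_const_nhds
  have hco : Filter.IsCoboundedUnder (· ≤ ·) Filter.atTop
      (fun n : ℕ => Real.log (f n) / (n:ℝ)) :=
    Filter.IsCoboundedUnder.of_frequently_ge
      ((Filter.eventually_atTop.2 ⟨1, hflb⟩).frequently)
  calc Filter.limsup (fun n : ℕ => Real.log (f n) / (n:ℝ)) Filter.atTop
      ≤ Filter.limsup (fun n : ℕ => Real.log 2 / (n:ℝ) - B) Filter.atTop :=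
        Filter.limsup_le_limsup (Filter.eventually_atTop.2 ⟨1, hflog⟩) hco
          hg.isBoundedUnder_le
    _ = 0 - B := hg.limsup_eq
    _ = -B := by ring

set_option maxHeartbeats 1600000 in
/-- Corollary: for `k ≥ k* = max{D(P₂‖P₁), D(P₁‖P₂)}/D*` and phase-two parameter `λ = λ*`
(so `α = 0`), the two-phase test attains the exponents `(E₁(γ), E₂(γ))`, and hence
achieves every `(E₁, E₂)` with `E₁ ≤ E₁(γ)` and `E₂ ≤ E₂(γ)`. -/
theorem twoPhase_achieves_corner (P₁ P₂ : 𝒳 → ℝ)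
    (h1pos : ∀ x, 0 < P₁ x) (h2pos : ∀ x, 0 < P₂ x)
    (h1sum : ∑ x, P₁ x = 1) (h2sum : ∑ x, P₂ x = 1)
    (hne : P₁ ≠ P₂)
    (ls : ℝ) (hls : ls ∈ Set.Icc (0:ℝ) 1)
    (hchern : kl (tilt P₁ P₂ ls) P₁ = kl (tilt P₁ P₂ ls) P₂)
    (γ : ℝ) (hγ0 : 0 < γ) (hγD : γ < kl (tilt P₁ P₂ ls) P₁)
    (k : ℕ) (hk : 0 < k)
    (hkstar : max (kl P₂ P₁ / kl (tilt P₁ P₂ ls) P₁)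
        (kl P₁ P₂ / kl (tilt P₁ P₂ ls) P₁) ≤ (k : ℝ))
    (l₁ l₂ : ℝ)
    (hl₁ : l₁ ∈ Set.Icc (0:ℝ) 1) (hl₂ : l₂ ∈ Set.Icc (0:ℝ) 1)
    (hg1 : kl (tilt P₁ P₂ l₁) P₂ = γ) (hg2 : kl (tilt P₁ P₂ l₂) P₁ = γ) :
    Filter.limsup (fun n : ℕ =>
        Real.log (prodProb P₁ (twoPhaseA2 P₁ P₂ k n
          (kl (tilt P₁ P₂ l₂) P₂ - kl (tilt P₁ P₂ l₂) P₁)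
          (kl (tilt P₁ P₂ l₁) P₂ - kl (tilt P₁ P₂ l₁) P₁)
          (kl (tilt P₁ P₂ ls) P₂ - kl (tilt P₁ P₂ ls) P₁))) / (n : ℝ))
      Filter.atTop ≤ -(E1exp P₁ P₂ γ) ∧
    Filter.limsup (fun n : ℕ =>
        Real.log (prodProb P₂ (twoPhaseA1 P₁ P₂ k n
          (kl (tilt P₁ P₂ l₂) P₂ - kl (tilt P₁ P₂ l₂) P₁)
          (kl (tilt P₁ P₂ l₁) P₂ - kl (tilt P₁ P₂ l₁) P₁)
          (kl (tilt P₁ P₂ ls) P₂ - kl (tilt P₁ P₂ ls) P₁))) / (n : ℝ))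
      Filter.atTop ≤ -(E2exp P₁ P₂ γ) ∧
    ∀ E₁ E₂ : ℝ, 0 ≤ E₁ → E₁ ≤ E1exp P₁ P₂ γ → 0 ≤ E₂ → E₂ ≤ E2exp P₁ P₂ γ →
      ∀ δ : ℝ, 0 < δ → ∃ n₀ : ℕ, ∀ n : ℕ, n₀ ≤ n →
        prodProb P₁ (twoPhaseA2 P₁ P₂ k n
            (kl (tilt P₁ P₂ l₂) P₂ - kl (tilt P₁ P₂ l₂) P₁)
            (kl (tilt P₁ P₂ l₁) P₂ - kl (tilt P₁ P₂ l₁) P₁)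
            (kl (tilt P₁ P₂ ls) P₂ - kl (tilt P₁ P₂ ls) P₁))
          ≤ Real.exp (-((E₁ - δ) * n)) ∧
        prodProb P₂ (twoPhaseA1 P₁ P₂ k n
            (kl (tilt P₁ P₂ l₂) P₂ - kl (tilt P₁ P₂ l₂) P₁)
            (kl (tilt P₁ P₂ l₁) P₂ - kl (tilt P₁ P₂ l₁) P₁)
            (kl (tilt P₁ P₂ ls) P₂ - kl (tilt P₁ P₂ ls) P₁))
          ≤ Real.exp (-((E₂ - δ) * n)) := by
  have hMls : Mf P₁ P₂ ls = 0 := by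
    rw [← beta_eq P₁ P₂ h1pos h2pos ls, hchern, sub_self]
  have hαzero : kl (tilt P₁ P₂ ls) P₂ - kl (tilt P₁ P₂ ls) P₁ = 0 := by
    rw [hchern, sub_self]
  rw [hαzero, beta_eq P₁ P₂ h1pos h2pos l₁, beta_eq P₁ P₂ h1pos h2pos l₂]
  have h1n : ∀ x, 0 ≤ P₁ x := fun x => le_of_lt (h1pos x)
  have h2n : ∀ x, 0 ≤ P₂ x := fun x => le_of_lt (h2pos x)
  have hDs_pos : 0 < kl (tilt P₁ P₂ ls) P₁ := lt_trans hγ0 hγD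
  have hkR : (0:ℝ) ≤ (k:ℝ) := Nat.cast_nonneg k
  have hkD1 : kl P₂ P₁ ≤ (k:ℝ) * kl (tilt P₁ P₂ ls) P₁ := by
    have h := le_trans (le_max_left _ (kl P₁ P₂ / kl (tilt P₁ P₂ ls) P₁)) hkstar
    rw [div_le_iff₀ hDs_pos] at h
    exact h
  have hkD2 : kl P₁ P₂ ≤ (k:ℝ) * kl (tilt P₁ P₂ ls) P₁ := by
    have h := le_trans (le_max_right (kl P₂ P₁ / kl (tilt P₁ P₂ ls) P₁) _) hkstar
    rw [div_le_iff₀ hDs_pos] at h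
    exact h
  set B₁ : ℝ := min (kl (tilt P₁ P₂ l₁) P₁) ((k:ℝ) * kl (tilt P₁ P₂ ls) P₁) with hB₁
  set B₂ : ℝ := min (kl (tilt P₁ P₂ l₂) P₂) ((k:ℝ) * kl (tilt P₁ P₂ ls) P₁) with hB₂
  have hBa1 : B₁ ≤ kl (tilt P₁ P₂ l₁) P₁ := by rw [hB₁]; exact min_le_left _ _
  have hBb1 : B₁ ≤ (k:ℝ) * kl (tilt P₁ P₂ ls) P₁ := by rw [hB₁]; exact min_le_right _ _
  have hBa2 : B₂ ≤ kl (tilt P₁ P₂ l₂) P₂ := by rw [hB₂]; exact min_le_left _ _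
  have hBb2 : B₂ ≤ (k:ℝ) * kl (tilt P₁ P₂ ls) P₁ := by rw [hB₂]; exact min_le_right _ _
  have hE1B : E1exp P₁ P₂ γ ≤ B₁ := by
    refine Real.sSup_le ?_ (le_min (kl_nonneg (tilt P₁ P₂ l₁) P₁
      (tilt_pos P₁ P₂ h1pos h2pos l₁) h1pos (tilt_sum P₁ P₂ h1pos h2pos l₁) h1sum)
      (mul_nonneg hkR (le_of_lt hDs_pos)))
    rintro E ⟨l, hl, hγle, rfl⟩
    have h := E1elt_le P₁ P₂ h1pos h2pos h2sum hγ0 hl₁ hg1 hl hγle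
    exact le_min h.1 (h.2.trans hkD1)
  have hE2B : E2exp P₁ P₂ γ ≤ B₂ := by
    refine Real.sSup_le ?_ (le_min (kl_nonneg (tilt P₁ P₂ l₂) P₂
      (tilt_pos P₁ P₂ h1pos h2pos l₂) h2pos (tilt_sum P₁ P₂ h1pos h2pos l₂) h2sum)
      (mul_nonneg hkR (le_of_lt hDs_pos)))
    rintro E ⟨l, hl, hγle, rfl⟩
    have h := E2elt_le P₁ P₂ h1pos h2pos h1sum hγ0 hl₂ hg2 hl hγle
    exact le_min h.1 (h.2.trans hkD2)
  obtain ⟨x₀, -, hx₀⟩ := Finset.exists_min_image Finset.univ (LLx P₁ P₂) Finset.univ_nonempty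
  obtain ⟨x₁, -, hx₁⟩ := Finset.exists_max_image Finset.univ (LLx P₁ P₂) Finset.univ_nonempty
  have hx₀' : ∀ x, LLx P₁ P₂ x₀ ≤ LLx P₁ P₂ x := fun x => hx₀ x (Finset.mem_univ x)
  have hx₁' : ∀ x, LLx P₁ P₂ x ≤ LLx P₁ P₂ x₁ := fun x => hx₁ x (Finset.mem_univ x)
  -- Upper bounds
  have hub1 : ∀ n : ℕ, 1 ≤ n →
      prodProb P₁ (twoPhaseA2 P₁ P₂ k n (Mf P₁ P₂ l₂) (Mf P₁ P₂ l₁) 0)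
        ≤ 2 * Real.exp (-((n:ℝ) * B₁)) := by
    intro n hn
    have hnR : (0:ℝ) ≤ (n:ℝ) := Nat.cast_nonneg n
    have hb := bound_A2 P₁ P₂ h1pos h2pos h1sum l₁ ls hl₁ hls hMls k n hk hn (Mf P₁ P₂ l₂)
    have e1 : Real.exp (-((n:ℝ) * kl (tilt P₁ P₂ l₁) P₁)) ≤ Real.exp (-((n:ℝ) * B₁)) :=
      Real.exp_le_exp.2 (by nlinarith [mul_le_mul_of_nonneg_left hBa1 hnR])
    have e2 : Real.exp (-((k:ℝ) * (n:ℝ) * kl (tilt P₁ P₂ ls) P₁))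
        ≤ Real.exp (-((n:ℝ) * B₁)) :=
      Real.exp_le_exp.2 (by nlinarith [mul_le_mul_of_nonneg_left hBb1 hnR])
    calc prodProb P₁ (twoPhaseA2 P₁ P₂ k n (Mf P₁ P₂ l₂) (Mf P₁ P₂ l₁) 0) ≤ _ := hb
      _ ≤ Real.exp (-((n:ℝ) * B₁)) + Real.exp (-((n:ℝ) * B₁)) := add_le_add e1 e2
      _ = 2 * Real.exp (-((n:ℝ) * B₁)) := by ring
  have hub2 : ∀ n : ℕ, 1 ≤ n →
      prodProb P₂ (twoPhaseA1 P₁ P₂ k n (Mf P₁ P₂ l₂) (Mf P₁ P₂ l₁) 0)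
        ≤ 2 * Real.exp (-((n:ℝ) * B₂)) := by
    intro n hn
    have hnR : (0:ℝ) ≤ (n:ℝ) := Nat.cast_nonneg n
    have hb := bound_A1 P₁ P₂ h1pos h2pos h2sum l₂ ls hl₂ hls hMls k n hk hn (Mf P₁ P₂ l₁)
    rw [← hchern] at hb
    have e1 : Real.exp (-((n:ℝ) * kl (tilt P₁ P₂ l₂) P₂)) ≤ Real.exp (-((n:ℝ) * B₂)) :=
      Real.exp_le_exp.2 (by nlinarith [mul_le_mul_of_nonneg_left hBa2 hnR])
    have e2 : Real.exp (-((k:ℝ) * (n:ℝ) * kl (tilt P₁ P₂ ls) P₁))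
        ≤ Real.exp (-((n:ℝ) * B₂)) :=
      Real.exp_le_exp.2 (by nlinarith [mul_le_mul_of_nonneg_left hBb2 hnR])
    calc prodProb P₂ (twoPhaseA1 P₁ P₂ k n (Mf P₁ P₂ l₂) (Mf P₁ P₂ l₁) 0) ≤ _ := hb
      _ ≤ Real.exp (-((n:ℝ) * B₂)) + Real.exp (-((n:ℝ) * B₂)) := add_le_add e1 e2
      _ = 2 * Real.exp (-((n:ℝ) * B₂)) := by ring
  -- Lower bounds (nonemptiness)
  have hlb1 : ∀ n : ℕ, 1 ≤ n →
      Real.exp ((n:ℝ) * (((k:ℝ) + 1) * Real.log (P₁ x₀)))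
        ≤ prodProb P₁ (twoPhaseA2 P₁ P₂ k n (Mf P₁ P₂ l₂) (Mf P₁ P₂ l₁) 0) := by
    intro n hn
    have hnN : n ≤ (k + 1) * n := Nat.le_mul_of_pos_left n (Nat.succ_pos k)
    have hnR : (0:ℝ) < (n:ℝ) := by exact_mod_cast hn
    have hmem : (fun _ : Fin ((k+1)*n) => x₀)
        ∈ twoPhaseA2 P₁ P₂ k n (Mf P₁ P₂ l₂) (Mf P₁ P₂ l₁) 0 := by
      simp only [twoPhaseA2, Set.mem_setOf_eq]
      left
      rw [S1_const P₁ P₂ n hnN x₀, mul_comm, mul_div_assoc, div_self (ne_of_gt hnR), mul_one]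
      exact min_le_Mf P₁ P₂ h1pos h2pos hx₀' l₁
    have hsingle := prodProb_ge_single P₁ h1n hmem
    calc Real.exp ((n:ℝ) * (((k:ℝ) + 1) * Real.log (P₁ x₀)))
        = P₁ x₀ ^ ((k+1)*n : ℕ) := by
          rw [← Real.rpow_natCast (P₁ x₀) ((k+1)*n), Real.rpow_def_of_pos (h1pos x₀)]
          congr 1
          push_cast
          ring
      _ = ∏ _i : Fin ((k+1)*n), P₁ x₀ := by
          rw [Finset.prod_const, Finset.card_univ, Fintype.card_fin]
      _ ≤ _ := hsingle
  have hlb2 : ∀ n : ℕ, 1 ≤ n →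
      Real.exp ((n:ℝ) * (((k:ℝ) + 1) * Real.log (P₂ x₁)))
        ≤ prodProb P₂ (twoPhaseA1 P₁ P₂ k n (Mf P₁ P₂ l₂) (Mf P₁ P₂ l₁) 0) := by
    intro n hn
    have hnN : n ≤ (k + 1) * n := Nat.le_mul_of_pos_left n (Nat.succ_pos k)
    have hnR : (0:ℝ) < (n:ℝ) := by exact_mod_cast hn
    have hmem : (fun _ : Fin ((k+1)*n) => x₁)
        ∈ twoPhaseA1 P₁ P₂ k n (Mf P₁ P₂ l₂) (Mf P₁ P₂ l₁) 0 := by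
      simp only [twoPhaseA1, Set.mem_setOf_eq]
      left
      rw [S1_const P₁ P₂ n hnN x₁, mul_comm, mul_div_assoc, div_self (ne_of_gt hnR), mul_one]
      exact Mf_le_max P₁ P₂ h1pos h2pos hx₁' l₂
    have hsingle := prodProb_ge_single P₂ h2n hmem
    calc Real.exp ((n:ℝ) * (((k:ℝ) + 1) * Real.log (P₂ x₁)))
        = P₂ x₁ ^ ((k+1)*n : ℕ) := by
          rw [← Real.rpow_natCast (P₂ x₁) ((k+1)*n), Real.rpow_def_of_pos (h2pos x₁)]
          congr 1
          push_cast
          ring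
      _ = ∏ _i : Fin ((k+1)*n), P₂ x₁ := by
          rw [Finset.prod_const, Finset.card_univ, Fintype.card_fin]
      _ ≤ _ := hsingle
  refine ⟨?_, ?_, ?_⟩
  · exact (limsup_log_le hub1 hlb1).trans (by linarith)
  · exact (limsup_log_le hub2 hlb2).trans (by linarith)
  · intro E₁ E₂ hE₁0 hE₁ hE₂0 hE₂ δ hδ
    refine ⟨max 1 (Nat.ceil (Real.log 2 / δ)), fun n hn => ?_⟩
    have hn1 : 1 ≤ n := le_trans (le_max_left _ _) hn
    have hnR : (0:ℝ) ≤ (n:ℝ) := Nat.cast_nonneg n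
    have hceil : Nat.ceil (Real.log 2 / δ) ≤ n := le_trans (le_max_right _ _) hn
    have hlog2 : Real.log 2 ≤ δ * (n:ℝ) := by
      have hc2 : ((Nat.ceil (Real.log 2 / δ) : ℕ) : ℝ) ≤ (n:ℝ) := by exact_mod_cast hceil
      have h := (Nat.le_ceil (Real.log 2 / δ)).trans hc2
      rw [div_le_iff₀ hδ] at h
      linarith
    have hEB1 : E₁ ≤ B₁ := hE₁.trans hE1B
    have hEB2 : E₂ ≤ B₂ := hE₂.trans hE2B
    constructor
    · calc prodProb P₁ (twoPhaseA2 P₁ P₂ k n (Mf P₁ P₂ l₂) (Mf P₁ P₂ l₁) 0)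
          ≤ 2 * Real.exp (-((n:ℝ) * B₁)) := hub1 n hn1
        _ = Real.exp (Real.log 2 + -((n:ℝ) * B₁)) := by
            rw [Real.exp_add, Real.exp_log two_pos]
        _ ≤ Real.exp (-((E₁ - δ) * (n:ℝ))) :=
            Real.exp_le_exp.2 (by nlinarith [mul_le_mul_of_nonneg_left hEB1 hnR])
    · calc prodProb P₂ (twoPhaseA1 P₁ P₂ k n (Mf P₁ P₂ l₂) (Mf P₁ P₂ l₁) 0)
          ≤ 2 * Real.exp (-((n:ℝ) * B₂)) := hub2 n hn1
        _ = Real.exp (Real.log 2 + -((n:ℝ) * B₂)) := by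
            rw [Real.exp_add, Real.exp_log two_pos]
        _ ≤ Real.exp (-((E₂ - δ) * (n:ℝ))) :=
            Real.exp_le_exp.2 (by nlinarith [mul_le_mul_of_nonneg_left hEB2 hnR])
end
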